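/- arXiv:2311.10265 — 5 statements merged into one kernel-verified Lean document; each statement's English description precedes it below -/
import Mathlib

section
/- For any g in GL_n(R) and any ε > 0, the map g acts on the set b(g⁻,ε) = {x ∈ P(R^n) : d(x, H_g⁻) > ε} by contraction: for any distinct x, y in b(g⁻,ε), we have d(g·x, g·y)/d(x,y) ≤ σ₂(g)/(ε² σ₁(g)), where σ₁(g) ≥ σ₂(g) are the two largest singular values of g. -/
/- STATEMENT 0: For any `g ∈ GL_n(ℝ)` (given through its Cartan/singular value
decomposition `g = k' ∘ diag(a) ∘ k` with `k, k'` orthogonal and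
`a 0 ≥ a 1 ≥ ⋯ > 0`) and any `ε > 0`, the projective action of `g` contracts the
region `b(g⁻, ε) = {x ∈ P(ℝⁿ) : d(x, H_g⁻) > ε}`:
for distinct points `x = ℝv`, `y = ℝw` in `b(g⁻, ε)`,
`d(g x, g y) / d(x, y) ≤ σ₂(g)/(ε² σ₁(g))`. -/

open scoped RealInnerProductSpace
noncomputable section

/-- Projective distance `d(ℝv, ℝw) = ‖v ∧ w‖ / (‖v‖ ‖w‖)`. -/
def projDist {n : ℕ} (v w : EuclideanSpace ℝ (Fin n)) : ℝ :=
  Real.sqrt (‖v‖ ^ 2 * ‖w‖ ^ 2 - ⟪v, w⟫ ^ 2) / (‖v‖ * ‖w‖)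

/-- Distance from the projective point `ℝv` to the projective hyperplane with
normal vector `u`. -/
def distToHyp {n : ℕ} (v u : EuclideanSpace ℝ (Fin n)) : ℝ :=
  |⟪v, u⟫| / (‖v‖ * ‖u‖)

/-- The diagonal map with entries `a`. -/
def diagMap {n : ℕ} (a : Fin n → ℝ) (v : EuclideanSpace ℝ (Fin n)) :
    EuclideanSpace ℝ (Fin n) :=
  (WithLp.equiv 2 (Fin n → ℝ)).symm (fun i => a i * v i)

namespace ContractionAux

variable {n : ℕ}

lemma diagMap_apply (a : Fin n → ℝ) (v : EuclideanSpace ℝ (Fin n)) (i : Fin n) :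
    diagMap a v i = a i * v i := rfl

lemma inner_eq (v w : EuclideanSpace ℝ (Fin n)) : ⟪v, w⟫ = ∑ i, v i * w i := by
  simp [PiLp.inner_apply, RCLike.inner_apply, conj_trivial]
  exact Finset.sum_congr rfl fun i _ => mul_comm _ _

lemma norm_sq_eq (v : EuclideanSpace ℝ (Fin n)) : ‖v‖ ^ 2 = ∑ i, v i ^ 2 := by
  rw [← real_inner_self_eq_norm_sq, inner_eq]
  simp [sq]

/-- Lagrange's identity. -/
lemma lagrange (v w : Fin n → ℝ) :
    (∑ i, v i ^ 2) * (∑ i, w i ^ 2) - (∑ i, v i * w i) ^ 2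
      = (1 / 2) * ∑ i, ∑ j, (v i * w j - v j * w i) ^ 2 := by
  have key : ∑ i, ∑ j, (v i * w j - v j * w i) ^ 2
      = (∑ i, ∑ j, (v i)^2 * (w j)^2) + (∑ i, ∑ j, (v j)^2 * (w i)^2)
        - 2 * ∑ i, ∑ j, (v i * w i) * (v j * w j) := by
    simp only [Finset.mul_sum, ← Finset.sum_add_distrib, ← Finset.sum_sub_distrib]
    exact Finset.sum_congr rfl fun i _ => Finset.sum_congr rfl fun j _ => by ring
  have e1 : ∑ i, ∑ j, (v i)^2 * (w j)^2 = (∑ i, v i ^ 2) * (∑ i, w i ^ 2) := by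
    rw [Finset.sum_mul_sum]
  have e2 : ∑ i, ∑ j, (v j)^2 * (w i)^2 = (∑ i, v i ^ 2) * (∑ i, w i ^ 2) := by
    rw [Finset.sum_comm, e1]
  have e3 : ∑ i, ∑ j, (v i * w i) * (v j * w j) = (∑ i, v i * w i) ^ 2 := by
    rw [sq, Finset.sum_mul_sum]
  rw [key, e1, e2, e3]; ring

lemma gram_nonneg (v w : Fin n → ℝ) :
    0 ≤ (∑ i, v i ^ 2) * (∑ i, w i ^ 2) - (∑ i, v i * w i) ^ 2 := by
  rw [lagrange]
  positivity

end ContractionAux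

theorem contraction_on_repelling_complement
    {n : ℕ} (hn : 2 ≤ n)
    (g : EuclideanSpace ℝ (Fin n) →ₗ[ℝ] EuclideanSpace ℝ (Fin n))
    (k k' : EuclideanSpace ℝ (Fin n) ≃ₗᵢ[ℝ] EuclideanSpace ℝ (Fin n))
    (a : Fin n → ℝ) (ha : ∀ i, 0 < a i)
    (hmono : ∀ i j : Fin n, i ≤ j → a j ≤ a i)
    (hg : ∀ v, g v = k' (diagMap a (k v)))
    (ε : ℝ) (hε : 0 < ε)
    (v w : EuclideanSpace ℝ (Fin n)) (hv : v ≠ 0) (hw : w ≠ 0)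
    (hdistinct : ¬ ∃ c : ℝ, w = c • v)
    (hvb : ε < distToHyp v (k.symm (EuclideanSpace.single (⟨0, by omega⟩ : Fin n) 1)))
    (hwb : ε < distToHyp w (k.symm (EuclideanSpace.single (⟨0, by omega⟩ : Fin n) 1))) :
    projDist (g v) (g w) / projDist v w
      ≤ a ⟨1, by omega⟩ / (ε ^ 2 * a ⟨0, by omega⟩) := by
  classical
  open ContractionAux in
  set i0 : Fin n := ⟨0, by omega⟩ with hi0
  set i1 : Fin n := ⟨1, by omega⟩ with hi1
  set p := k v with hp
  set q := k w with hq
  have hp0 : p ≠ 0 := by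
    simp [hp, hv]
  have hq0 : q ≠ 0 := by
    simp [hq, hw]
  have hpn : 0 < ‖p‖ := norm_pos_iff.mpr hp0
  have hqn : 0 < ‖q‖ := norm_pos_iff.mpr hq0
  -- translate the hyperplane conditions
  have hvb' : ε * ‖p‖ < |p i0| := by
    have h1 : ⟪v, k.symm (EuclideanSpace.single i0 (1:ℝ))⟫ = p i0 := by
      rw [← k.inner_map_map v (k.symm (EuclideanSpace.single i0 (1:ℝ)))]
      simp [EuclideanSpace.inner_single_right, hp]
    have h2 : ‖k.symm (EuclideanSpace.single i0 (1:ℝ))‖ = 1 := by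
      simp [EuclideanSpace.norm_single]
    have := hvb
    rw [distToHyp, h1, h2, mul_one] at this
    have hnv : ‖v‖ = ‖p‖ := (k.norm_map v).symm
    rw [hnv] at this
    calc ε * ‖p‖ < |p i0| / ‖p‖ * ‖p‖ := by
          exact mul_lt_mul_of_pos_right this hpn
      _ = |p i0| := div_mul_cancel₀ _ (ne_of_gt hpn)
  have hwb' : ε * ‖q‖ < |q i0| := by
    have h1 : ⟪w, k.symm (EuclideanSpace.single i0 (1:ℝ))⟫ = q i0 := by
      rw [← k.inner_map_map w (k.symm (EuclideanSpace.single i0 (1:ℝ)))]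
      simp [EuclideanSpace.inner_single_right, hq]
    have h2 : ‖k.symm (EuclideanSpace.single i0 (1:ℝ))‖ = 1 := by
      simp [EuclideanSpace.norm_single]
    have := hwb
    rw [distToHyp, h1, h2, mul_one] at this
    have hnw : ‖w‖ = ‖q‖ := (k.norm_map w).symm
    rw [hnw] at this
    calc ε * ‖q‖ < |q i0| / ‖q‖ * ‖q‖ := by
          exact mul_lt_mul_of_pos_right this hqn
      _ = |q i0| := div_mul_cancel₀ _ (ne_of_gt hqn)
  -- linear independence of p, q
  have hdist' : ¬ ∃ c : ℝ, q = c • p := by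
    rintro ⟨c, hc⟩
    exact hdistinct ⟨c, by
      have := congrArg k.symm hc
      simpa [hp, hq, map_smul] using this⟩
  -- strict Cauchy-Schwarz
  have hcs : ⟪p, q⟫ ^ 2 < ‖p‖ ^ 2 * ‖q‖ ^ 2 := by
    have hle : |⟪p, q⟫| ≤ ‖p‖ * ‖q‖ := abs_real_inner_le_norm p q
    have hne : |⟪p, q⟫| ≠ ‖p‖ * ‖q‖ := by
      intro h
      have := (norm_inner_eq_norm_iff (𝕜 := ℝ) hp0 hq0).mp (by simpa using h)
      obtain ⟨r, -, hr⟩ := this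
      exact hdist' ⟨r, hr⟩
    have hlt : |⟪p, q⟫| < ‖p‖ * ‖q‖ := lt_of_le_of_ne hle hne
    calc ⟪p, q⟫ ^ 2 = |⟪p, q⟫| ^ 2 := (sq_abs _).symm
      _ < (‖p‖ * ‖q‖) ^ 2 := by
          exact pow_lt_pow_left₀ hlt (abs_nonneg _) (by norm_num)
      _ = ‖p‖ ^ 2 * ‖q‖ ^ 2 := by ring
  set G : ℝ := ‖p‖ ^ 2 * ‖q‖ ^ 2 - ⟪p, q⟫ ^ 2 with hG
  have hGpos : 0 < G := sub_pos.mpr hcs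
  -- reduce projDist of g-images to the diagonal action
  have hproj1 : projDist (g v) (g w) = projDist (diagMap a p) (diagMap a q) := by
    rw [hg v, hg w]
    simp [projDist, LinearIsometryEquiv.inner_map_map, LinearIsometryEquiv.norm_map, hp, hq]
  have hproj2 : projDist v w = projDist p q := by
    simp [projDist, hp, hq, k.inner_map_map, k.norm_map]
  set A := diagMap a p with hA
  set B := diagMap a q with hB
  -- Gram determinant bound via Lagrange
  have ha0 : 0 < a i0 := ha i0
  have ha1 : 0 < a i1 := ha i1
  set GA : ℝ := ‖A‖ ^ 2 * ‖B‖ ^ 2 - ⟪A, B⟫ ^ 2 with hGA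
  have hGAbound : GA ≤ (a i0 * a i1) ^ 2 * G := by
    have hL1 : GA = (1 / 2) * ∑ i, ∑ j, (A i * B j - A j * B i) ^ 2 := by
      rw [hGA, norm_sq_eq, norm_sq_eq, inner_eq, ContractionAux.lagrange]
    have hL2 : G = (1 / 2) * ∑ i, ∑ j, (p i * q j - p j * q i) ^ 2 := by
      rw [hG, norm_sq_eq, norm_sq_eq, inner_eq, ContractionAux.lagrange]
    rw [hL1, hL2]
    have hsum : ∑ i, ∑ j, (A i * B j - A j * B i) ^ 2
        ≤ (a i0 * a i1) ^ 2 * ∑ i, ∑ j, (p i * q j - p j * q i) ^ 2 := by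
      rw [Finset.mul_sum]
      refine Finset.sum_le_sum fun i _ => ?_
      rw [Finset.mul_sum]
      refine Finset.sum_le_sum fun j _ => ?_
      have hAi : A i = a i * p i := rfl
      have hAj : A j = a j * p j := rfl
      have hBi : B i = a i * q i := rfl
      have hBj : B j = a j * q j := rfl
      rw [hAi, hAj, hBi, hBj]
      have hfact : a i * p i * (a j * q j) - a j * p j * (a i * q i)
          = (a i * a j) * (p i * q j - p j * q i) := by ring
      rw [hfact, mul_pow]
      rcases eq_or_ne i j with rfl | hij
      · simp
      · have hprod : a i * a j ≤ a i0 * a i1 := by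
          rcases lt_or_gt_of_ne hij with h | h
          · have h1 : a i ≤ a i0 := hmono i0 i (by exact Fin.mk_le_of_le_val (Nat.zero_le _))
            have h2 : a j ≤ a i1 := hmono i1 j (by
              have : (1 : ℕ) ≤ (j : ℕ) := by
                have := Fin.lt_iff_val_lt_val.mp h
                omega
              exact Fin.mk_le_of_le_val this)
            exact mul_le_mul h1 h2 (le_of_lt (ha j)) (le_of_lt ha0)
          · have h1 : a j ≤ a i0 := hmono i0 j (Fin.mk_le_of_le_val (Nat.zero_le _))
            have h2 : a i ≤ a i1 := hmono i1 i (by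
              have : (1 : ℕ) ≤ (i : ℕ) := by
                have := Fin.lt_iff_val_lt_val.mp h
                omega
              exact Fin.mk_le_of_le_val this)
            calc a i * a j = a j * a i := by ring
              _ ≤ a i0 * a i1 := mul_le_mul h1 h2 (le_of_lt (ha i)) (le_of_lt ha0)
        have hsq : (a i * a j) ^ 2 ≤ (a i0 * a i1) ^ 2 := by
          apply pow_le_pow_left₀ (mul_nonneg (ha i).le (ha j).le) hprod
        exact mul_le_mul_of_nonneg_right hsq (sq_nonneg _)
    linarith
  have hGAnn : 0 ≤ GA := by
    rw [hGA, norm_sq_eq, norm_sq_eq, inner_eq]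
    exact ContractionAux.gram_nonneg _ _
  -- norm lower bounds for A, B
  have hAnorm : a i0 * ε * ‖p‖ ≤ ‖A‖ := by
    have h1 : (a i0 * ε * ‖p‖) ^ 2 ≤ ‖A‖ ^ 2 := by
      rw [norm_sq_eq]
      calc (a i0 * ε * ‖p‖) ^ 2 = (a i0) ^ 2 * (ε * ‖p‖) ^ 2 := by ring
        _ ≤ (a i0) ^ 2 * (p i0) ^ 2 := by
            apply mul_le_mul_of_nonneg_left _ (sq_nonneg _)
            calc (ε * ‖p‖) ^ 2 ≤ |p i0| ^ 2 := by
                  apply pow_le_pow_left₀ (by positivity) (le_of_lt hvb')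
              _ = (p i0) ^ 2 := sq_abs _
        _ = (A i0) ^ 2 := by rw [hA, diagMap_apply]; ring
        _ ≤ ∑ i, A i ^ 2 :=
            Finset.single_le_sum (f := fun i => A i ^ 2) (fun i _ => sq_nonneg _)
              (Finset.mem_univ i0)
    have := Real.sqrt_le_sqrt h1
    rwa [Real.sqrt_sq (by positivity), Real.sqrt_sq (norm_nonneg _)] at this
  have hBnorm : a i0 * ε * ‖q‖ ≤ ‖B‖ := by
    have h1 : (a i0 * ε * ‖q‖) ^ 2 ≤ ‖B‖ ^ 2 := by
      rw [norm_sq_eq]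
      calc (a i0 * ε * ‖q‖) ^ 2 = (a i0) ^ 2 * (ε * ‖q‖) ^ 2 := by ring
        _ ≤ (a i0) ^ 2 * (q i0) ^ 2 := by
            apply mul_le_mul_of_nonneg_left _ (sq_nonneg _)
            calc (ε * ‖q‖) ^ 2 ≤ |q i0| ^ 2 := by
                  apply pow_le_pow_left₀ (by positivity) (le_of_lt hwb')
              _ = (q i0) ^ 2 := sq_abs _
        _ = (B i0) ^ 2 := by rw [hB, diagMap_apply]; ring
        _ ≤ ∑ i, B i ^ 2 :=
            Finset.single_le_sum (f := fun i => B i ^ 2) (fun i _ => sq_nonneg _)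
              (Finset.mem_univ i0)
    have := Real.sqrt_le_sqrt h1
    rwa [Real.sqrt_sq (by positivity), Real.sqrt_sq (norm_nonneg _)] at this
  have hApos : 0 < ‖A‖ := lt_of_lt_of_le (by positivity) hAnorm
  have hBpos : 0 < ‖B‖ := lt_of_lt_of_le (by positivity) hBnorm
  -- bound projDist (A, B)
  have hsqrtGA : Real.sqrt GA ≤ a i0 * a i1 * Real.sqrt G := by
    calc Real.sqrt GA ≤ Real.sqrt ((a i0 * a i1) ^ 2 * G) := Real.sqrt_le_sqrt hGAbound
      _ = a i0 * a i1 * Real.sqrt G := by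
          rw [Real.sqrt_mul (by positivity), Real.sqrt_sq (by positivity)]
  have hmain : projDist A B ≤ (a i1 / (ε ^ 2 * a i0)) * projDist p q := by
    have hAB : projDist A B = Real.sqrt GA / (‖A‖ * ‖B‖) := rfl
    have hpq : projDist p q = Real.sqrt G / (‖p‖ * ‖q‖) := rfl
    rw [hAB, hpq]
    have hstep : Real.sqrt GA / (‖A‖ * ‖B‖)
        ≤ (a i0 * a i1 * Real.sqrt G) / ((a i0 * ε * ‖p‖) * (a i0 * ε * ‖q‖)) := by
      apply div_le_div₀ (by positivity) hsqrtGA (by positivity)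
      exact mul_le_mul hAnorm hBnorm (by positivity) (le_of_lt hApos)
    refine hstep.trans (le_of_eq ?_)
    field_simp
  -- conclusion
  have hpqpos : 0 < projDist p q := by
    have : 0 < Real.sqrt G := Real.sqrt_pos.mpr hGpos
    exact div_pos this (by positivity)
  rw [hproj1, hproj2, div_le_iff₀ hpqpos]
  exact hmain
end
end

section
/- For every 0 < ε < 1/3 and every g ∈ SL₂^±(R), the action of g on b(g⁻, ε) ⊂ P(R²) satisfies: for all x ∈ b(g⁻, ε), −2 log‖g‖ ≤ log|g'(x)| ≤ −2 log‖g‖ − 2 log ε, and |g''(x)| ≤ 10/(ε³‖g‖²). In particular, g restricted to b(g⁻, ε) scales by ‖g‖⁻² with distortion 10ε⁻². -/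
/- STATEMENT 4: For 0 < ε < 1/3 and g ∈ SL₂^±(ℝ) (given through its Cartan
decomposition g = k' ∘ diag(a) ∘ k with a 0 ≥ a 1 > 0, a 0 * a 1 = 1), on the
region b(g⁻, ε) = {x ∈ P(ℝ²) : d(x, H_g⁻) > ε} (where H_g⁻ = k⁻¹E₂ is the
repelling point): −2 log_q ‖g‖ ≤ log_q |g'(x)| ≤ −2 log_q ‖g‖ − 2 log_q ε,
|g''(x)| ≤ 10/(ε³‖g‖²); in particular g scales b(g⁻,ε) by ‖g‖⁻² with
distortion 10 ε⁻². Derivatives via a C² lift F of the circle map. -/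

open scoped RealInnerProductSpace
noncomputable section

open Real

/-- The unit vector of angle `π t`. -/
def vecTheta (t : ℝ) : EuclideanSpace ℝ (Fin 2) :=
  (WithLp.equiv 2 (Fin 2 → ℝ)).symm ![Real.cos (π * t), Real.sin (π * t)]

lemma inner2 (v w : EuclideanSpace ℝ (Fin 2)) : ⟪v, w⟫ = v 0 * w 0 + v 1 * w 1 := by
  simp [PiLp.inner_apply, Fin.sum_univ_two, RCLike.inner_apply]; ring

lemma normsq2 (v : EuclideanSpace ℝ (Fin 2)) : ‖v‖ ^ 2 = v 0 ^ 2 + v 1 ^ 2 := by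
  rw [← real_inner_self_eq_norm_sq, inner2]; ring

lemma vec0 (t : ℝ) : vecTheta t 0 = Real.cos (π * t) := rfl
lemma vec1 (t : ℝ) : vecTheta t 1 = Real.sin (π * t) := rfl

lemma vecNorm (t : ℝ) : ‖vecTheta t‖ = 1 := by
  have h : ‖vecTheta t‖ ^ 2 = 1 := by
    rw [normsq2, vec0, vec1]
    nlinarith [sin_sq_add_cos_sq (π * t)]
  nlinarith [norm_nonneg (vecTheta t)]

lemma diag_apply {n : ℕ} (a : Fin n → ℝ) (v : EuclideanSpace ℝ (Fin n)) (i : Fin n) :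
    diagMap a v i = a i * v i := rfl

lemma decomp2 (v : EuclideanSpace ℝ (Fin 2)) :
    v = v 0 • EuclideanSpace.single (0 : Fin 2) 1 + v 1 • EuclideanSpace.single (1 : Fin 2) 1 := by
  ext i; fin_cases i <;> simp

lemma apply_coord (g : EuclideanSpace ℝ (Fin 2) →L[ℝ] EuclideanSpace ℝ (Fin 2))
    (x y : ℝ) (v w : EuclideanSpace ℝ (Fin 2)) (i : Fin 2) :
    g (x • v + y • w) i = x * g v i + y * g w i := by
  rw [map_add, map_smul, map_smul]
  simp [PiLp.add_apply, PiLp.smul_apply, smul_eq_mul]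

lemma ratio_helper (n r c : ℝ) (hn : n ≠ 0) (hr : r ≠ 0) (hc : c ≠ 0) :
    (n / r) / (c⁻¹ * n) = c / r := by
  field_simp

set_option maxHeartbeats 16000000 in
theorem sl2pm_bounded_distortion_on_repelling_complement
    (q : ℝ) (hq : 1 < q)
    (ε : ℝ) (hε0 : 0 < ε) (hε : ε < 1 / 3)
    (g : EuclideanSpace ℝ (Fin 2) →L[ℝ] EuclideanSpace ℝ (Fin 2))
    (k k' : EuclideanSpace ℝ (Fin 2) ≃ₗᵢ[ℝ] EuclideanSpace ℝ (Fin 2))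
    (a : Fin 2 → ℝ) (ha : ∀ i, 0 < a i) (hmono : a 1 ≤ a 0)
    (hdet : a 0 * a 1 = 1)
    (hg : ∀ v, g v = k' (diagMap a (k v))) :
    -- derivative bounds on `b(g⁻, ε)`, via any C² lift `F` of the circle map
    (∀ F : ℝ → ℝ, ContDiff ℝ 2 F →
      (∀ t : ℝ, ∃ c : ℝ, c ≠ 0 ∧ g (vecTheta t) = c • vecTheta (F t)) →
      ∀ t : ℝ,
        ε < projDist (vecTheta t) (k.symm (EuclideanSpace.single (1 : Fin 2) 1)) →
        (-(2 * Real.logb q ‖g‖) ≤ Real.logb q |deriv F t| ∧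
          Real.logb q |deriv F t| ≤ -(2 * Real.logb q ‖g‖) - 2 * Real.logb q ε ∧
          |deriv (deriv F) t| ≤ 10 / (ε ^ 3 * ‖g‖ ^ 2))) ∧
    -- in particular, `g` scales `b(g⁻, ε)` by `‖g‖⁻²` with distortion `10 ε⁻²`
    (∀ x x' : EuclideanSpace ℝ (Fin 2), ‖x‖ = 1 → ‖x'‖ = 1 →
      ε < projDist x (k.symm (EuclideanSpace.single (1 : Fin 2) 1)) →
      ε < projDist x' (k.symm (EuclideanSpace.single (1 : Fin 2) 1)) →
      projDist x x' ≠ 0 →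
      (10 * ε⁻¹ ^ 2)⁻¹ ≤ projDist (g x) (g x') / ((‖g‖ ^ 2)⁻¹ * projDist x x') ∧
        projDist (g x) (g x') / ((‖g‖ ^ 2)⁻¹ * projDist x x') ≤ 10 * ε⁻¹ ^ 2) := by
  have ha0 := ha 0
  have ha1 := ha 1
  have ha0one : (1 : ℝ) ≤ a 0 := by nlinarith
  have h01 : (0 : ℝ) ≤ a 0 ^ 2 - a 1 ^ 2 := by nlinarith
  set E0 : EuclideanSpace ℝ (Fin 2) := EuclideanSpace.single (0 : Fin 2) 1 with hE0
  set E1 : EuclideanSpace ℝ (Fin 2) := EuclideanSpace.single (1 : Fin 2) 1 with hE1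
  set u : EuclideanSpace ℝ (Fin 2) := k.symm E1 with hu_def
  have hun : ‖u‖ = 1 := by
    rw [hu_def, LinearIsometryEquiv.norm_map, hE1, EuclideanSpace.norm_single]; norm_num
  have hkv1 : ∀ v : EuclideanSpace ℝ (Fin 2), (k v) 1 = ⟪v, u⟫ := by
    intro v
    have h1 : ⟪k v, E1⟫ = (k v) 1 := by
      rw [hE1, EuclideanSpace.inner_single_right]; simp
    rw [← h1, hu_def, ← LinearIsometryEquiv.inner_map_eq_flip]
  have hQ : ∀ v : EuclideanSpace ℝ (Fin 2),
      ‖g v‖ ^ 2 = a 0 ^ 2 * ‖v‖ ^ 2 - (a 0 ^ 2 - a 1 ^ 2) * ⟪v, u⟫ ^ 2 := by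
    intro v
    rw [hg, LinearIsometryEquiv.norm_map, normsq2, diag_apply, diag_apply]
    have hk : (k v) 0 ^ 2 + (k v) 1 ^ 2 = ‖v‖ ^ 2 := by
      rw [← normsq2, LinearIsometryEquiv.norm_map]
    have h1 := hkv1 v
    linear_combination (a 0 ^ 2) * hk + ((a 1 ^ 2 - a 0 ^ 2) * ((k v) 1 + ⟪v, u⟫)) * h1
  have hcs : ∀ v : EuclideanSpace ℝ (Fin 2), ‖v‖ = 1 → ⟪v, u⟫ ^ 2 ≤ 1 := by
    intro v hv
    have h := abs_real_inner_le_norm v u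
    rw [hv, hun, one_mul] at h
    nlinarith [abs_nonneg ⟪v, u⟫, sq_abs ⟪v, u⟫]
  have hPD : ∀ v : EuclideanSpace ℝ (Fin 2), ‖v‖ = 1 →
      projDist v u = Real.sqrt (1 - ⟪v, u⟫ ^ 2) := by
    intro v hv
    rw [projDist, hv, hun]; norm_num
  have hgap : ∀ v : EuclideanSpace ℝ (Fin 2), ‖v‖ = 1 → ε < projDist v u →
      ε ^ 2 < 1 - ⟪v, u⟫ ^ 2 := by
    intro v hv h
    rw [hPD v hv] at h
    exact (Real.lt_sqrt hε0.le).mp h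
  have hQub : ∀ v : EuclideanSpace ℝ (Fin 2), ‖v‖ = 1 → ‖g v‖ ^ 2 ≤ a 0 ^ 2 := by
    intro v hv; rw [hQ, hv]; nlinarith [mul_nonneg h01 (sq_nonneg ⟪v, u⟫)]
  have hQlb : ∀ v : EuclideanSpace ℝ (Fin 2), ‖v‖ = 1 → ε < projDist v u →
      ε ^ 2 * a 0 ^ 2 < ‖g v‖ ^ 2 := by
    intro v hv h
    have h2 := hgap v hv h
    have h3 := hcs v hv
    rw [hQ, hv]
    nlinarith [mul_nonneg (sq_nonneg (a 1)) (sq_nonneg ⟪v, u⟫),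
      mul_pos (pow_pos ha0 2) (by linarith : (0:ℝ) < 1 - ⟪v, u⟫ ^ 2 - ε ^ 2)]
  have hQpos : ∀ v : EuclideanSpace ℝ (Fin 2), ‖v‖ = 1 → 0 < ‖g v‖ ^ 2 := by
    intro v hv
    have h3 := hcs v hv
    rw [hQ, hv]
    nlinarith [mul_le_mul_of_nonneg_left h3 h01, pow_pos ha1 2]
  have hnorm : ‖g‖ = a 0 := by
    apply le_antisymm
    · apply g.opNorm_le_bound ha0.le
      intro v
      have h2 : ‖g v‖ ^ 2 ≤ (a 0 * ‖v‖) ^ 2 := by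
        rw [hQ]; nlinarith [mul_nonneg h01 (sq_nonneg ⟪v, u⟫)]
      have h3 := Real.sqrt_le_sqrt h2
      rwa [Real.sqrt_sq (norm_nonneg _), Real.sqrt_sq (by positivity)] at h3
    · have hx : ‖k.symm E0‖ = 1 := by
        rw [LinearIsometryEquiv.norm_map, hE0, EuclideanSpace.norm_single]; norm_num
      have hiu : ⟪k.symm E0, u⟫ = 0 := by
        rw [hu_def, LinearIsometryEquiv.inner_map_map, inner2, hE0, hE1]
        simp [EuclideanSpace.single_apply]
      have h1 : ‖g (k.symm E0)‖ ^ 2 = a 0 ^ 2 := by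
        rw [hQ, hx, hiu]; ring
      have h2 : ‖g (k.symm E0)‖ = a 0 := by
        nlinarith [norm_nonneg (g (k.symm E0))]
      calc a 0 = ‖g (k.symm E0)‖ := h2.symm
        _ ≤ ‖g‖ * ‖k.symm E0‖ := g.le_opNorm _
        _ = ‖g‖ := by rw [hx, mul_one]
  constructor
  · intro F hF hc t
    -- frequently used coordinates facts
    have hFd : Differentiable ℝ F := hF.differentiable (by norm_num)
    have hgV : ∀ r : ℝ, g (vecTheta r)
        = Real.cos (π * r) • g E0 + Real.sin (π * r) • g E1 := by
      intro r
      rw [← map_smul, ← map_smul, ← map_add]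
      congr 1
      rw [hE0, hE1]
      have := decomp2 (vecTheta r)
      rwa [vec0, vec1] at this
    have hgVi : ∀ (r : ℝ) (i : Fin 2), g (vecTheta r) i
        = Real.cos (π * r) * g E0 i + Real.sin (π * r) * g E1 i := by
      intro r i
      rw [hgV r]
      simp [PiLp.add_apply, PiLp.smul_apply, smul_eq_mul]
    set Dg : ℝ := g E0 0 * g E1 1 - g E0 1 * g E1 0 with hDg_def
    -- the global derivative formula
    have hder : ∀ s : ℝ, deriv F s = Dg / ‖g (vecTheta s)‖ ^ 2 := by
      intro s
      obtain ⟨cs, hcs0, hcseq⟩ := hc s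
      have ws0 : g (vecTheta s) 0 = cs * Real.cos (π * F s) := by
        rw [hcseq]; simp [PiLp.smul_apply, smul_eq_mul, vec0]
      have ws1 : g (vecTheta s) 1 = cs * Real.sin (π * F s) := by
        rw [hcseq]; simp [PiLp.smul_apply, smul_eq_mul, vec1]
      set A : ℝ := g (vecTheta s) 0 * g E0 0 + g (vecTheta s) 1 * g E0 1 with hA
      set B : ℝ := g (vecTheta s) 0 * g E1 0 + g (vecTheta s) 1 * g E1 1 with hB
      set A' : ℝ := g (vecTheta s) 0 * g E0 1 - g (vecTheta s) 1 * g E0 0 with hA'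
      set B' : ℝ := g (vecTheta s) 0 * g E1 1 - g (vecTheta s) 1 * g E1 0 with hB'
      set h : ℝ → ℝ := fun r =>
        (A' * Real.cos (π * r) + B' * Real.sin (π * r)) * Real.cos (π * (F r - F s))
        - (A * Real.cos (π * r) + B * Real.sin (π * r)) * Real.sin (π * (F r - F s)) with hh
      have hzero : h = fun _ => (0 : ℝ) := by
        funext r
        obtain ⟨cr, hcr0, hcreq⟩ := hc r
        have key0 : Real.cos (π * r) * g E0 0 + Real.sin (π * r) * g E1 0
            = cr * Real.cos (π * F r) := by
          rw [← hgVi r 0, hcreq]; simp [PiLp.smul_apply, smul_eq_mul, vec0]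
        have key1 : Real.cos (π * r) * g E0 1 + Real.sin (π * r) * g E1 1
            = cr * Real.sin (π * F r) := by
          rw [← hgVi r 1, hcreq]; simp [PiLp.smul_apply, smul_eq_mul, vec1]
        show (A' * Real.cos (π * r) + B' * Real.sin (π * r)) * Real.cos (π * (F r - F s))
          - (A * Real.cos (π * r) + B * Real.sin (π * r)) * Real.sin (π * (F r - F s)) = 0
        have hcross : A' * Real.cos (π * r) + B' * Real.sin (π * r)
            = cs * cr * (Real.cos (π * F s) * Real.sin (π * F r)
              - Real.sin (π * F s) * Real.cos (π * F r)) := by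
          rw [hA', hB', ws0, ws1]
          linear_combination (cs * Real.cos (π * F s)) * key1
            - (cs * Real.sin (π * F s)) * key0
        have hinner : A * Real.cos (π * r) + B * Real.sin (π * r)
            = cs * cr * (Real.cos (π * F s) * Real.cos (π * F r)
              + Real.sin (π * F s) * Real.sin (π * F r)) := by
          rw [hA, hB, ws0, ws1]
          linear_combination (cs * Real.cos (π * F s)) * key0
            + (cs * Real.sin (π * F s)) * key1
        rw [hcross, hinner, show π * (F r - F s) = π * F r - π * F s by ring,
          Real.cos_sub, Real.sin_sub]
        ring
      -- differentiate h at s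
      have hF's : HasDerivAt F (deriv F s) s := (hFd s).hasDerivAt
      have hΔ : HasDerivAt (fun r => π * (F r - F s)) (π * deriv F s) s :=
        (hF's.sub_const (F s)).const_mul π
      have hcosΔ : HasDerivAt (fun r => Real.cos (π * (F r - F s)))
          (-Real.sin (π * (F s - F s)) * (π * deriv F s)) s := hΔ.cos
      have hsinΔ : HasDerivAt (fun r => Real.sin (π * (F r - F s)))
          (Real.cos (π * (F s - F s)) * (π * deriv F s)) s := hΔ.sin
      have hid : HasDerivAt (fun r : ℝ => π * r) (π * 1) s := (hasDerivAt_id s).const_mul π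
      have hcosr : HasDerivAt (fun r => Real.cos (π * r)) (-Real.sin (π * s) * (π * 1)) s :=
        hid.cos
      have hsinr : HasDerivAt (fun r => Real.sin (π * r)) (Real.cos (π * s) * (π * 1)) s :=
        hid.sin
      have h1 : HasDerivAt (fun r => A' * Real.cos (π * r) + B' * Real.sin (π * r))
          (A' * (-Real.sin (π * s) * (π * 1)) + B' * (Real.cos (π * s) * (π * 1))) s :=
        (hcosr.const_mul A').add (hsinr.const_mul B')
      have h2 : HasDerivAt (fun r => A * Real.cos (π * r) + B * Real.sin (π * r))
          (A * (-Real.sin (π * s) * (π * 1)) + B * (Real.cos (π * s) * (π * 1))) s :=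
        (hcosr.const_mul A).add (hsinr.const_mul B)
      have hhd : HasDerivAt h
          ((A' * (-Real.sin (π * s) * (π * 1)) + B' * (Real.cos (π * s) * (π * 1)))
              * Real.cos (π * (F s - F s))
            + (A' * Real.cos (π * s) + B' * Real.sin (π * s))
              * (-Real.sin (π * (F s - F s)) * (π * deriv F s))
            - ((A * (-Real.sin (π * s) * (π * 1)) + B * (Real.cos (π * s) * (π * 1)))
              * Real.sin (π * (F s - F s))
            + (A * Real.cos (π * s) + B * Real.sin (π * s))
              * (Real.cos (π * (F s - F s)) * (π * deriv F s)))) s :=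
        (h1.mul hcosΔ).sub (h2.mul hsinΔ)
      have hd0 : deriv h s = 0 := by rw [hzero]; simp
      have heq := hhd.deriv
      rw [hd0] at heq
      have heq2 : (B' * Real.cos (π * s) - A' * Real.sin (π * s)) * π
          - (A * Real.cos (π * s) + B * Real.sin (π * s)) * (π * deriv F s) = 0 := by
        rw [sub_self, mul_zero, Real.sin_zero, Real.cos_zero] at heq
        linear_combination -heq
      have hQs : A * Real.cos (π * s) + B * Real.sin (π * s) = ‖g (vecTheta s)‖ ^ 2 := by
        rw [hA, hB, normsq2]
        linear_combination (g (vecTheta s) 0) * (hgVi s 0).symm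
          + (g (vecTheta s) 1) * (hgVi s 1).symm
      have hDgs : B' * Real.cos (π * s) - A' * Real.sin (π * s) = Dg := by
        rw [hA', hB', hgVi s 0, hgVi s 1, hDg_def]
        linear_combination (g E0 0 * g E1 1 - g E0 1 * g E1 0)
          * Real.sin_sq_add_cos_sq (π * s)
      rw [hQs, hDgs] at heq2
      have hQp := hQpos (vecTheta s) (vecNorm s)
      rw [eq_div_iff (ne_of_gt hQp)]
      have hπ := Real.pi_pos
      nlinarith [heq2]
    -- |Dg| = 1
    have hDg2 : Dg ^ 2 = 1 := by
      have hL : Dg ^ 2 = ‖g E0‖ ^ 2 * ‖g E1‖ ^ 2 - ⟪g E0, g E1⟫ ^ 2 := by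
        rw [hDg_def, normsq2, normsq2, inner2]; ring
      have hkE0 : (k E0) 0 ^ 2 + (k E0) 1 ^ 2 = 1 := by
        rw [← normsq2, LinearIsometryEquiv.norm_map, hE0, EuclideanSpace.norm_single]
        norm_num
      have hkE1 : (k E1) 0 ^ 2 + (k E1) 1 ^ 2 = 1 := by
        rw [← normsq2, LinearIsometryEquiv.norm_map, hE1, EuclideanSpace.norm_single]
        norm_num
      have hk01 : (k E0) 0 * (k E1) 0 + (k E0) 1 * (k E1) 1 = 0 := by
        rw [← inner2, LinearIsometryEquiv.inner_map_map, hE0, hE1, inner2]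
        simp [EuclideanSpace.single_apply]
      rw [hL, hg E0, hg E1, LinearIsometryEquiv.norm_map, LinearIsometryEquiv.norm_map,
        LinearIsometryEquiv.inner_map_map, normsq2, normsq2, inner2]
      simp only [diag_apply]
      linear_combination (a 0 ^ 2 * a 1 ^ 2 * (k E1 0 ^ 2 + k E1 1 ^ 2)) * hkE0
        + (a 0 ^ 2 * a 1 ^ 2) * hkE1
        - (a 0 ^ 2 * a 1 ^ 2 * (k E0 0 * k E1 0 + k E0 1 * k E1 1)) * hk01
        + (a 0 * a 1 + 1) * hdet
    have habsDg : |Dg| = 1 := by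
      have h1 : (|Dg| - 1) * (|Dg| + 1) = 0 := by
        linear_combination sq_abs Dg + hDg2
      rcases mul_eq_zero.mp h1 with h | h
      · linarith
      · nlinarith [abs_nonneg Dg]
    intro hdist
    have hp2 := hcs (vecTheta t) (vecNorm t)
    have hgapt := hgap _ (vecNorm t) hdist
    have hub := hQub _ (vecNorm t)
    have hlb := hQlb _ (vecNorm t) hdist
    have hQp := hQpos _ (vecNorm t)
    have habs : |deriv F t| = (‖g (vecTheta t)‖ ^ 2)⁻¹ := by
      rw [hder t, abs_div, habsDg, abs_of_pos hQp, one_div]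
    have hlogpow : Real.logb q (a 0 ^ 2) = 2 * Real.logb q (a 0) := by
      rw [Real.logb_pow]; push_cast; ring
    refine ⟨?_, ?_, ?_⟩
    · rw [hnorm, habs, Real.logb_inv]
      have h2 : Real.logb q (‖g (vecTheta t)‖ ^ 2) ≤ Real.logb q (a 0 ^ 2) :=
        Real.logb_le_logb_of_le hq hQp hub
      linarith [h2, hlogpow]
    · rw [hnorm, habs, Real.logb_inv]
      have h2 : Real.logb q (ε ^ 2 * a 0 ^ 2) ≤ Real.logb q (‖g (vecTheta t)‖ ^ 2) :=
        Real.logb_le_logb_of_le hq (by positivity) hlb.le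
      have h3 : Real.logb q (ε ^ 2 * a 0 ^ 2)
          = 2 * Real.logb q ε + 2 * Real.logb q (a 0) := by
        rw [Real.logb_mul (by positivity) (by positivity), Real.logb_pow, Real.logb_pow]
        push_cast; ring
      linarith [h2, h3, hlogpow]
    · -- second derivative bound
      set p : ℝ → ℝ := fun s => u 0 * Real.cos (π * s) + u 1 * Real.sin (π * s) with hp
      have hpin : ∀ s : ℝ, ⟪vecTheta s, u⟫ = p s := by
        intro s; rw [inner2, vec0, vec1]; simp only [hp]; ring
      have hPQ : ∀ s : ℝ, ‖g (vecTheta s)‖ ^ 2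
          = a 0 ^ 2 - (a 0 ^ 2 - a 1 ^ 2) * p s ^ 2 := by
        intro s; rw [hQ, vecNorm, hpin]; ring
      have hderF : deriv F = fun s => Dg / (a 0 ^ 2 - (a 0 ^ 2 - a 1 ^ 2) * p s ^ 2) := by
        funext s; rw [hder s, hPQ s]
      have hidt : HasDerivAt (fun r : ℝ => π * r) (π * 1) t := (hasDerivAt_id t).const_mul π
      have hpd : HasDerivAt p
          (u 0 * (-Real.sin (π * t) * (π * 1)) + u 1 * (Real.cos (π * t) * (π * 1))) t := by
        rw [hp]
        exact (hidt.cos.const_mul (u 0)).add (hidt.sin.const_mul (u 1))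
      set dpv : ℝ := u 0 * (-Real.sin (π * t) * (π * 1)) + u 1 * (Real.cos (π * t) * (π * 1))
        with hdpv
      have hP' := ((hpd.pow 2).const_mul (a 0 ^ 2 - a 1 ^ 2)).const_sub (a 0 ^ 2)
      have hPt : 0 < a 0 ^ 2 - (a 0 ^ 2 - a 1 ^ 2) * p t ^ 2 := by rw [← hPQ t]; exact hQp
      have hdd := (hasDerivAt_const t Dg).div hP' (ne_of_gt hPt)
      have hdd : HasDerivAt (deriv F) ((0 * (a 0 ^ 2 - (a 0 ^ 2 - a 1 ^ 2) * p t ^ 2)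
          - Dg * -((a 0 ^ 2 - a 1 ^ 2) * (((2:ℕ):ℝ) * p t ^ 1 * dpv)))
          / (a 0 ^ 2 - (a 0 ^ 2 - a 1 ^ 2) * p t ^ 2) ^ 2) t := by
        rw [hderF]; exact hdd
      rw [hdd.deriv, hnorm]
      -- auxiliary quantities
      have huu : u 0 ^ 2 + u 1 ^ 2 = 1 := by
        have h5 : ‖u‖ ^ 2 = 1 := by rw [hun]; norm_num
        rw [normsq2] at h5; exact h5
      have hptle : p t ^ 2 ≤ 1 := by rw [← hpin t]; exact hp2
      have h1p : (0:ℝ) ≤ 1 - p t ^ 2 := by linarith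
      have hdp2 : dpv ^ 2 = π ^ 2 * (1 - p t ^ 2) := by
        rw [hdpv]
        simp only [hp]
        linear_combination (π ^ 2 * (u 0 ^ 2 + u 1 ^ 2)) * Real.sin_sq_add_cos_sq (π * t)
          + π ^ 2 * huu
      have hs1n : (0:ℝ) ≤ Real.sqrt (1 - p t ^ 2) := Real.sqrt_nonneg _
      have hs1sq : Real.sqrt (1 - p t ^ 2) ^ 2 = 1 - p t ^ 2 := Real.sq_sqrt h1p
      have hεs1 : ε < Real.sqrt (1 - p t ^ 2) := by
        have h6 := hdist
        rw [hPD _ (vecNorm t), hpin t] at h6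
        exact h6
      have habsdpv : |dpv| = π * Real.sqrt (1 - p t ^ 2) := by
        rw [← Real.sqrt_sq_eq_abs, hdp2, Real.sqrt_mul (sq_nonneg π),
          Real.sqrt_sq Real.pi_pos.le]
      have habs_pt : |p t| ≤ 1 := by
        have h7 : |p t| ^ 2 ≤ 1 := by rw [sq_abs]; exact hptle
        linarith only [h7, abs_nonneg (p t), sq_nonneg (|p t| - 1)]
      have hXlb : a 0 ^ 2 * Real.sqrt (1 - p t ^ 2) ^ 2
          ≤ a 0 ^ 2 - (a 0 ^ 2 - a 1 ^ 2) * p t ^ 2 := by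
        rw [hs1sq]
        have h9 : (0:ℝ) ≤ a 1 ^ 2 * p t ^ 2 := mul_nonneg (sq_nonneg _) (sq_nonneg _)
        linarith only [h9]
      have hC : a 0 ^ 2 - a 1 ^ 2 ≤ a 0 ^ 2 := by nlinarith [sq_nonneg (a 1)]
      rw [abs_div, abs_of_pos (pow_pos hPt 2)]
      rw [div_le_div_iff₀ (pow_pos hPt 2) (by positivity)]
      have hnum : |0 * (a 0 ^ 2 - (a 0 ^ 2 - a 1 ^ 2) * p t ^ 2)
          - Dg * -((a 0 ^ 2 - a 1 ^ 2) * ((2:ℕ) * p t ^ 1 * dpv))|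
          = (a 0 ^ 2 - a 1 ^ 2) * (2 * (|p t| * |dpv|)) := by
        have h8 : 0 * (a 0 ^ 2 - (a 0 ^ 2 - a 1 ^ 2) * p t ^ 2)
            - Dg * -((a 0 ^ 2 - a 1 ^ 2) * ((2:ℕ) * p t ^ 1 * dpv))
            = Dg * ((a 0 ^ 2 - a 1 ^ 2) * (2 * (p t * dpv))) := by push_cast; ring
        rw [h8, abs_mul, habsDg, one_mul, abs_mul, abs_of_nonneg h01, abs_mul,
          abs_of_nonneg (by norm_num : (0:ℝ) ≤ 2), abs_mul]
      rw [hnum]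
      -- final estimate
      have e1 : (a 0 ^ 2 - a 1 ^ 2) * (2 * (|p t| * |dpv|))
          ≤ 2 * π * a 0 ^ 2 * Real.sqrt (1 - p t ^ 2) := by
        rw [habsdpv]
        have t2 := mul_le_mul_of_nonneg_right
          (mul_le_mul hC habs_pt (abs_nonneg (p t)) (sq_nonneg (a 0)))
          (mul_nonneg Real.pi_pos.le hs1n)
        linarith only [t2]
      have hε3 : ε ^ 3 ≤ Real.sqrt (1 - p t ^ 2) ^ 3 := by
        exact pow_le_pow_left₀ hε0.le hεs1.le 3
      have e2 : ε ^ 3 * a 0 ^ 2 ≤ Real.sqrt (1 - p t ^ 2) ^ 3 * a 0 ^ 2 :=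
        mul_le_mul_of_nonneg_right hε3 (sq_nonneg (a 0))
      have key1 : (a 0 ^ 2 - a 1 ^ 2) * (2 * (|p t| * |dpv|)) * (ε ^ 3 * a 0 ^ 2)
          ≤ 2 * π * a 0 ^ 2 * Real.sqrt (1 - p t ^ 2)
            * (Real.sqrt (1 - p t ^ 2) ^ 3 * a 0 ^ 2) := by
        apply mul_le_mul e1 e2 (by positivity)
        positivity
      have e4 : (a 0 ^ 2 * Real.sqrt (1 - p t ^ 2) ^ 2) ^ 2
          ≤ (a 0 ^ 2 - (a 0 ^ 2 - a 1 ^ 2) * p t ^ 2) ^ 2 :=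
        pow_le_pow_left₀ (by positivity) hXlb 2
      have key2 : 2 * π * a 0 ^ 2 * Real.sqrt (1 - p t ^ 2)
            * (Real.sqrt (1 - p t ^ 2) ^ 3 * a 0 ^ 2)
          ≤ 10 * (a 0 ^ 2 - (a 0 ^ 2 - a 1 ^ 2) * p t ^ 2) ^ 2 := by
        have e3 : 2 * π * a 0 ^ 2 * Real.sqrt (1 - p t ^ 2)
            * (Real.sqrt (1 - p t ^ 2) ^ 3 * a 0 ^ 2)
            = 2 * π * (a 0 ^ 2 * Real.sqrt (1 - p t ^ 2) ^ 2) ^ 2 := by ring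
        rw [e3]
        have t3 := mul_le_mul_of_nonneg_right Real.pi_le_four
          (sq_nonneg (a 0 ^ 2 * Real.sqrt (1 - p t ^ 2) ^ 2))
        linarith only [t3, e4, sq_nonneg (a 0 ^ 2 - (a 0 ^ 2 - a 1 ^ 2) * p t ^ 2)]
      linarith [key1, key2]
  · intro x x' hx hx' hεx hεx' hne
    have hkn : ∀ v : EuclideanSpace ℝ (Fin 2), (k v) 0 ^ 2 + (k v) 1 ^ 2 = ‖v‖ ^ 2 := by
      intro v; rw [← normsq2, LinearIsometryEquiv.norm_map]
    have hgn : ∀ v w : EuclideanSpace ℝ (Fin 2),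
        ‖g v‖ ^ 2 * ‖g w‖ ^ 2 - ⟪g v, g w⟫ ^ 2 = ‖v‖ ^ 2 * ‖w‖ ^ 2 - ⟪v, w⟫ ^ 2 := by
      intro v w
      rw [hg v, hg w, LinearIsometryEquiv.norm_map, LinearIsometryEquiv.norm_map,
        LinearIsometryEquiv.inner_map_map, normsq2, normsq2, inner2]
      simp only [diag_apply]
      rw [← hkn v, ← hkn w]
      have hvw : (k v) 0 * (k w) 0 + (k v) 1 * (k w) 1 = ⟪v, w⟫ := by
        rw [← inner2, LinearIsometryEquiv.inner_map_map]
      rw [← hvw]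
      linear_combination ((a 0 * a 1 + 1) * (k v 0 * k w 1 - k v 1 * k w 0) ^ 2) * hdet
    have hxx : projDist x x' = Real.sqrt (‖x‖ ^ 2 * ‖x'‖ ^ 2 - ⟪x, x'⟫ ^ 2) := by
      rw [projDist, hx, hx']; norm_num
    have hgxub : ‖g x‖ ≤ a 0 := by nlinarith [hQub x hx, norm_nonneg (g x)]
    have hgx'ub : ‖g x'‖ ≤ a 0 := by nlinarith [hQub x' hx', norm_nonneg (g x')]
    have hgxlb : ε * a 0 ≤ ‖g x‖ := by
      nlinarith [hQlb x hx hεx, norm_nonneg (g x), mul_pos hε0 ha0]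
    have hgx'lb : ε * a 0 ≤ ‖g x'‖ := by
      nlinarith [hQlb x' hx' hεx', norm_nonneg (g x'), mul_pos hε0 ha0]
    have hgxpos : 0 < ‖g x‖ := lt_of_lt_of_le (mul_pos hε0 ha0) hgxlb
    have hgx'pos : 0 < ‖g x'‖ := lt_of_lt_of_le (mul_pos hε0 ha0) hgx'lb
    have key : projDist (g x) (g x') = projDist x x' / (‖g x‖ * ‖g x'‖) := by
      rw [projDist, hgn, hxx]
    have hratio : projDist (g x) (g x') / ((‖g‖ ^ 2)⁻¹ * projDist x x')
        = a 0 ^ 2 / (‖g x‖ * ‖g x'‖) := by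
      rw [key, hnorm]
      exact ratio_helper _ _ _ hne (ne_of_gt (mul_pos hgxpos hgx'pos)) (ne_of_gt (pow_pos ha0 2))
    rw [hratio]
    constructor
    · have h1 : (1 : ℝ) ≤ a 0 ^ 2 / (‖g x‖ * ‖g x'‖) := by
        rw [le_div_iff₀ (by positivity)]
        nlinarith [hgxub, hgx'ub, hgxpos, hgx'pos]
      have h2 : (10 * ε⁻¹ ^ 2)⁻¹ ≤ 1 := by
        have h3 : (10 * ε⁻¹ ^ 2)⁻¹ = ε ^ 2 / 10 := by
          field_simp
        rw [h3]; nlinarith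
      linarith
    · rw [div_le_iff₀ (by positivity)]
      have hml : ε ^ 2 * a 0 ^ 2 ≤ ‖g x‖ * ‖g x'‖ := by
        nlinarith [hgxlb, hgx'lb, mul_pos hε0 ha0]
      have h10 : 10 * ε⁻¹ ^ 2 * (ε ^ 2 * a 0 ^ 2) = 10 * a 0 ^ 2 := by
        field_simp
      nlinarith [mul_le_mul_of_nonneg_left hml (by positivity : (0:ℝ) ≤ 10 * ε⁻¹ ^ 2)]
end
end

section
/- Let U = {upper-triangular block matrices diag-type [[λ², x, y],[0, λ⁻¹],[0, λ⁻¹]] : λ > 0, x, y ∈ R} and L = {[[det h, 0],[n, h]] : n ∈ R², h ∈ SL₂^±(R)} be the two subgroups of SL₃(R). Then the product set UL equals {g ∈ SL₃(R) : g⁻¹E₁ ∉ E₁^⊥}, and the decomposition g = uℓ with u ∈ U, ℓ ∈ L is unique (U ∩ L = {Id}). -/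
/- STATEMENT 6: With U = {[[λ², x, y],[0, λ⁻¹, 0],[0, 0, λ⁻¹]] : λ > 0, x, y ∈ ℝ}
and L = {[[det h, 0],[n, h]] : n ∈ ℝ², h ∈ SL₂^±(ℝ)} inside SL₃(ℝ), the product
set UL equals {g ∈ SL₃(ℝ) : g⁻¹E₁ ∉ E₁^⊥} (equivalently, the (1,1) entry of g⁻¹ is
nonzero), and the decomposition g = uℓ with u ∈ U, ℓ ∈ L is unique. -/

noncomputable section

def Uset : Set (Matrix (Fin 3) (Fin 3) ℝ) :=
  {m | ∃ lam x y : ℝ, 0 < lam ∧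
    m = !![lam ^ 2, x, y; 0, lam⁻¹, 0; 0, 0, lam⁻¹]}

def Lset : Set (Matrix (Fin 3) (Fin 3) ℝ) :=
  {m | ∃ (h : Matrix (Fin 2) (Fin 2) ℝ) (n : Fin 2 → ℝ),
    (h.det = 1 ∨ h.det = -1) ∧
    m = !![h.det, 0, 0; n 0, h 0 0, h 0 1; n 1, h 1 0, h 1 1]}

set_option maxHeartbeats 1000000 in
/-- The (0,0) entry of the inverse of a determinant-one 3×3 matrix is the
(0,0) cofactor. -/
lemma UL_inv00 (g : Matrix (Fin 3) (Fin 3) ℝ) (hg : g.det = 1) :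
    g⁻¹ 0 0 = g 1 1 * g 2 2 - g 1 2 * g 2 1 := by
  rw [Matrix.inv_def, hg, Ring.inverse_one, one_smul, Matrix.adjugate_fin_three]
  simp

set_option maxHeartbeats 1000000 in
theorem UL_decomposition_of_SL3
    -- the product set UL equals {g ∈ SL₃(ℝ) : g⁻¹E₁ ∉ E₁^⊥}
    : (∀ g : Matrix (Fin 3) (Fin 3) ℝ, g.det = 1 →
        ((∃ u ∈ Uset, ∃ l ∈ Lset, g = u * l) ↔ g⁻¹ 0 0 ≠ 0)) ∧
      -- uniqueness of the decomposition (U ∩ L = {Id})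
      (∀ u ∈ Uset, ∀ u' ∈ Uset, ∀ l ∈ Lset, ∀ l' ∈ Lset,
        u * l = u' * l' → u = u' ∧ l = l') := by
  constructor
  · intro g hg
    constructor
    · -- forward direction: a product u * l has nonzero (0,0) entry of inverse
      rintro ⟨u, ⟨lam, x, y, hlam, rfl⟩, l, ⟨h, n, hd, rfl⟩, rfl⟩
      rw [UL_inv00 _ hg]
      have hl : lam ≠ 0 := ne_of_gt hlam
      rw [Matrix.det_fin_two] at hd
      have hne : h 0 0 * h 1 1 - h 0 1 * h 1 0 ≠ 0 := by
        rcases hd with h1 | h1 <;> rw [h1] <;> norm_num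
      simp [Matrix.mul_fin_three]
      intro hcontra
      apply hne
      field_simp at hcontra
      linarith [hcontra]
    · -- converse: construct the decomposition
      intro hne
      have hc : g 1 1 * g 2 2 - g 1 2 * g 2 1 ≠ 0 := by
        rw [UL_inv00 g hg] at hne; exact hne
      set c := g 1 1 * g 2 2 - g 1 2 * g 2 1 with hcdef
      have habs : (0:ℝ) < |c| := abs_pos.mpr hc
      set lam : ℝ := (Real.sqrt |c|)⁻¹ with hlamdef
      have hsq : Real.sqrt |c| > 0 := Real.sqrt_pos.mpr habs
      have hlam : 0 < lam := inv_pos.mpr hsq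
      have hlam2 : lam ^ 2 = |c|⁻¹ := by
        rw [hlamdef, inv_pow, Real.sq_sqrt habs.le]
      set d : ℝ := lam ^ 2 * c with hddef
      have hd2 : d * d = 1 := by
        rw [hddef, hlam2]
        rcases abs_choice c with h1 | h1
        · rw [h1]; field_simp
        · rw [h1]; field_simp
      have hdet3 : g 0 0 * g 1 1 * g 2 2 - g 0 0 * g 1 2 * g 2 1 - g 0 1 * g 1 0 * g 2 2
          + g 0 1 * g 1 2 * g 2 0 + g 0 2 * g 1 0 * g 2 1 - g 0 2 * g 1 1 * g 2 0 = 1 := by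
        rw [Matrix.det_fin_three] at hg; exact hg
      have hdeth : Matrix.det !![lam * g 1 1, lam * g 1 2; lam * g 2 1, lam * g 2 2] = d := by
        rw [Matrix.det_fin_two_of, hddef]; ring
      refine ⟨!![lam ^ 2, d * lam * (g 0 1 * g 2 2 - g 0 2 * g 2 1),
          d * lam * (g 0 2 * g 1 1 - g 0 1 * g 1 2); 0, lam⁻¹, 0; 0, 0, lam⁻¹],
        ⟨lam, _, _, hlam, rfl⟩,
        _, ⟨!![lam * g 1 1, lam * g 1 2; lam * g 2 1, lam * g 2 2],
          ![lam * g 1 0, lam * g 2 0], ?_, rfl⟩, ?_⟩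
      · rw [hdeth, hddef, hlam2]
        rcases abs_choice c with h1 | h1
        · left; rw [h1]; field_simp
        · right; rw [h1]; field_simp
      · rw [hdeth]
        have hln : lam ≠ 0 := ne_of_gt hlam
        ext i j
        fin_cases i <;> fin_cases j <;>
          simp [Matrix.mul_apply, Fin.sum_univ_three] <;>
          first
            | (field_simp; done)
            | linear_combination (-(g 0 0)) * hd2 + (lam ^ 2 * d) * hdet3
            | linear_combination (-(g 0 1)) * hd2
            | linear_combination (-(g 0 2)) * hd2
  · -- uniqueness
    rintro u ⟨lam, x, y, hlam, rfl⟩ u' ⟨lam', x', y', hlam', rfl⟩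
      l ⟨h, n, hd, rfl⟩ l' ⟨h', n', hd', rfl⟩ heq
    have hln : lam ≠ 0 := ne_of_gt hlam
    have hln' : lam' ≠ 0 := ne_of_gt hlam'
    have E : ∀ i j, (!![lam ^ 2, x, y; 0, lam⁻¹, 0; 0, 0, lam⁻¹] *
          !![h.det, 0, 0; n 0, h 0 0, h 0 1; n 1, h 1 0, h 1 1]) i j =
        (!![lam' ^ 2, x', y'; 0, lam'⁻¹, 0; 0, 0, lam'⁻¹] *
          !![h'.det, 0, 0; n' 0, h' 0 0, h' 0 1; n' 1, h' 1 0, h' 1 1]) i j := by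
      intro i j; rw [heq]
    have e11 := E 1 1; have e12 := E 1 2; have e21 := E 2 1; have e22 := E 2 2
    have e10 := E 1 0; have e20 := E 2 0
    have e01 := E 0 1; have e02 := E 0 2
    simp [Matrix.mul_apply, Fin.sum_univ_three] at e11 e12 e21 e22 e10 e20 e01 e02
    rw [Matrix.det_fin_two] at hd hd'
    have key : lam⁻¹ * lam⁻¹ * (h 0 0 * h 1 1 - h 0 1 * h 1 0)
        = lam'⁻¹ * lam'⁻¹ * (h' 0 0 * h' 1 1 - h' 0 1 * h' 1 0) := by
      have t : lam⁻¹ * lam⁻¹ * (h 0 0 * h 1 1 - h 0 1 * h 1 0)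
          = (lam⁻¹ * h 0 0) * (lam⁻¹ * h 1 1) - (lam⁻¹ * h 0 1) * (lam⁻¹ * h 1 0) := by ring
      rw [t, e11, e12, e21, e22]; ring
    have hli : (0:ℝ) < lam⁻¹ := inv_pos.mpr hlam
    have hli' : (0:ℝ) < lam'⁻¹ := inv_pos.mpr hlam'
    have hinv : lam⁻¹ = lam'⁻¹ := by
      rcases hd with h1 | h1 <;> rcases hd' with h1' | h1' <;> rw [h1, h1'] at key
      · exact (mul_self_inj hli.le hli'.le).mp (by linarith)
      · nlinarith [mul_pos hli hli, mul_pos hli' hli']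
      · nlinarith [mul_pos hli hli, mul_pos hli' hli']
      · exact (mul_self_inj hli.le hli'.le).mp (by linarith)
    have hll : lam = lam' := by
      have := congrArg (·⁻¹) hinv; simpa using this
    subst hll
    have hinj : ∀ a b : ℝ, lam⁻¹ * a = lam⁻¹ * b → a = b := fun a b hab =>
      mul_left_cancel₀ (inv_ne_zero hln) hab
    have hh : h = h' := by
      ext i j
      fin_cases i <;> fin_cases j
      · exact hinj _ _ e11
      · exact hinj _ _ e12
      · exact hinj _ _ e21
      · exact hinj _ _ e22
    subst hh
    have hnn : n = n' := by
      funext i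
      fin_cases i
      · exact hinj _ _ e10
      · exact hinj _ _ e20
    subst hnn
    have hdne : h 0 0 * h 1 1 - h 0 1 * h 1 0 ≠ 0 := by
      rcases hd with h1 | h1 <;> rw [h1] <;> norm_num
    have c1 : (x - x') * h 0 0 + (y - y') * h 1 0 = 0 := by linarith [e01]
    have c2 : (x - x') * h 0 1 + (y - y') * h 1 1 = 0 := by linarith [e02]
    have hx : x = x' := by
      have hz : (x - x') * (h 0 0 * h 1 1 - h 0 1 * h 1 0) = 0 := by
        linear_combination h 1 1 * c1 - h 1 0 * c2
      rcases mul_eq_zero.mp hz with hz | hz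
      · linarith
      · exact absurd hz hdne
    have hy : y = y' := by
      have hz : (y - y') * (h 0 0 * h 1 1 - h 0 1 * h 1 0) = 0 := by
        linear_combination h 0 0 * c2 - h 0 1 * c1
      rcases mul_eq_zero.mp hz with hz | hz
      · linarith
      · exact absurd hz hdne
    exact ⟨by rw [hx, hy], rfl⟩
end
end

section
/- Let C > 1 and V ∈ P(R³) with d(V, E₁^⊥) ≥ 1/C. Then the projective map π(V, E₁^⊥, V^⊥) : P(V^⊥) → P(E₁^⊥) induced by the linear projection from V^⊥ to E₁^⊥ along V scales by 1 with distortion at most C; i.e., for all distinct x, x' ∈ P(V^⊥), 1/C ≤ d(π(V,E₁^⊥,V^⊥)x, π(V,E₁^⊥,V^⊥)x')/d(x,x') ≤ C. -/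
/- STATEMENT 12: Let C > 1 and V = ℝz ∈ P(ℝ³) with d(V, E₁^⊥) ≥ 1/C (for unit z,
d(V, E₁^⊥) = |z 0|). Then the projective map π(V, E₁^⊥, V^⊥) induced by the
linear projection v ↦ v − (v 0 / z 0)·z from V^⊥ to E₁^⊥ along V scales by 1
with distortion at most C. -/

noncomputable section

/-- Euclidean norm of a vector. -/
def en {m : ℕ} (v : Fin m → ℝ) : ℝ := Real.sqrt (∑ i, v i ^ 2)

/-- Euclidean inner product. -/
def ip {m : ℕ} (v w : Fin m → ℝ) : ℝ := ∑ i, v i * w i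

/-- Projective distance `d(ℝv, ℝw) = ‖v ∧ w‖ / (‖v‖ ‖w‖)`. -/
def pd {m : ℕ} (v w : Fin m → ℝ) : ℝ :=
  Real.sqrt (en v ^ 2 * en w ^ 2 - ip v w ^ 2) / (en v * en w)

/-- The element `ℓ = [[det h, 0],[n, h]]` of the group `L ⊂ SL₃(ℝ)`. -/
def Lmat (h : Matrix (Fin 2) (Fin 2) ℝ) (n : Fin 2 → ℝ) :
    Matrix (Fin 3) (Fin 3) ℝ :=
  !![h.det, 0, 0; n 0, h 0 0, h 0 1; n 1, h 1 0, h 1 1]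

lemma sqle_aux {a b : ℝ} (ha : 0 ≤ a) (hb : 0 ≤ b) (h : a ^ 2 ≤ b ^ 2) : a ≤ b := by
  nlinarith [h, ha, hb]

lemma ratio_bounds_aux {C t A A' B B' : ℝ} (hC : 1 < C) (ht : 0 < t)
    (hCt : 1 ≤ C * t) (hA : 0 < A) (hA' : 0 < A') (hB : 0 < B) (hB' : 0 < B')
    (h1 : A ≤ B) (h1' : A' ≤ B') (h2 : t * B ≤ A) (h2' : t * B' ≤ A') :
    1 / C ≤ A * A' / (t * (B * B')) ∧ A * A' / (t * (B * B')) ≤ C := by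
  have hC0 : (0:ℝ) < C := by linarith
  constructor
  · rw [le_div_iff₀ (by positivity), div_mul_eq_mul_div, div_le_iff₀ hC0]
    nlinarith [mul_le_mul h2 h2' (by positivity) hA.le, mul_pos (mul_pos hB hB') ht,
      mul_pos hB hB', hCt]
  · rw [div_le_iff₀ (by positivity)]
    nlinarith [mul_le_mul h1 h1' hA'.le hB.le, mul_pos (mul_pos hB hB') ht,
      mul_pos hB hB', hCt]

set_option maxHeartbeats 1000000

theorem projection_along_V_bilipschitz
    (C : ℝ) (hC : 1 < C)
    (z : Fin 3 → ℝ) (hz : en z = 1) (hz0 : 1 / C ≤ |z 0|)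
    (v v' : Fin 3 → ℝ) (hv : v ≠ 0) (hv' : v' ≠ 0)
    (hvz : ip v z = 0) (hv'z : ip v' z = 0)
    (hdist : pd v v' ≠ 0) :
    1 / C ≤ pd (fun i => v i - (v 0 / z 0) * z i) (fun i => v' i - (v' 0 / z 0) * z i)
        / pd v v' ∧
      pd (fun i => v i - (v 0 / z 0) * z i) (fun i => v' i - (v' 0 / z 0) * z i)
        / pd v v' ≤ C := by
  have hC0 : (0:ℝ) < C := by linarith
  have ht0 : (0:ℝ) < |z 0| := lt_of_lt_of_le (by positivity) hz0
  have hz00 : z 0 ≠ 0 := by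
    intro h; rw [h] at ht0; simp at ht0
  -- expand the hypotheses into coordinates
  have hEz : z 0 ^ 2 + z 1 ^ 2 + z 2 ^ 2 = 1 := by
    have h : Real.sqrt (z 0 ^ 2 + z 1 ^ 2 + z 2 ^ 2) = 1 := by
      simpa [en, Fin.sum_univ_three] using hz
    have h2 := Real.sq_sqrt (show (0:ℝ) ≤ z 0 ^ 2 + z 1 ^ 2 + z 2 ^ 2 by positivity)
    rw [h] at h2; linarith
  have hip : v 0 * z 0 + v 1 * z 1 + v 2 * z 2 = 0 := by
    simpa [ip, Fin.sum_univ_three] using hvz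
  have hip' : v' 0 * z 0 + v' 1 * z 1 + v' 2 * z 2 = 0 := by
    simpa [ip, Fin.sum_univ_three] using hv'z
  set lam : ℝ := z 0 * (v 1 * v' 2 - v 2 * v' 1) + z 1 * (v 2 * v' 0 - v 0 * v' 2)
      + z 2 * (v 0 * v' 1 - v 1 * v' 0) with hlam
  set w : Fin 3 → ℝ := fun i => v i - (v 0 / z 0) * z i with hwdef
  set w' : Fin 3 → ℝ := fun i => v' i - (v' 0 / z 0) * z i with hw'def
  have hw0 : w 0 = 0 := by simp only [hwdef]; field_simp; ring
  have hw'0 : w' 0 = 0 := by simp only [hw'def]; field_simp; ring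
  have hw1 : w 1 = v 1 - (v 0 / z 0) * z 1 := rfl
  have hw2 : w 2 = v 2 - (v 0 / z 0) * z 2 := rfl
  have hw'1 : w' 1 = v' 1 - (v' 0 / z 0) * z 1 := rfl
  have hw'2 : w' 2 = v' 2 - (v' 0 / z 0) * z 2 := rfl
  -- squared norms
  have hEv2 : en v ^ 2 = v 0 ^ 2 + v 1 ^ 2 + v 2 ^ 2 := by
    rw [en, Fin.sum_univ_three, Real.sq_sqrt (by positivity)]
  have hEv'2 : en v' ^ 2 = v' 0 ^ 2 + v' 1 ^ 2 + v' 2 ^ 2 := by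
    rw [en, Fin.sum_univ_three, Real.sq_sqrt (by positivity)]
  have hEw2 : en w ^ 2 = w 0 ^ 2 + w 1 ^ 2 + w 2 ^ 2 := by
    rw [en, Fin.sum_univ_three, Real.sq_sqrt (by positivity)]
  have hEw'2 : en w' ^ 2 = w' 0 ^ 2 + w' 1 ^ 2 + w' 2 ^ 2 := by
    rw [en, Fin.sum_univ_three, Real.sq_sqrt (by positivity)]
  have hKvv : ip v v' = v 0 * v' 0 + v 1 * v' 1 + v 2 * v' 2 := by
    rw [ip, Fin.sum_univ_three]
  have hKww : ip w w' = w 0 * w' 0 + w 1 * w' 1 + w 2 * w' 2 := by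
    rw [ip, Fin.sum_univ_three]
  -- Fact A : N(v, v') = lam ^ 2
  have hNv : (v 0 ^ 2 + v 1 ^ 2 + v 2 ^ 2) * (v' 0 ^ 2 + v' 1 ^ 2 + v' 2 ^ 2)
      - (v 0 * v' 0 + v 1 * v' 1 + v 2 * v' 2) ^ 2 = lam ^ 2 := by
    rw [hlam]
    linear_combination
      (-((v 1 * v' 2 - v 2 * v' 1) ^ 2 + (v 2 * v' 0 - v 0 * v' 2) ^ 2
        + (v 0 * v' 1 - v 1 * v' 0) ^ 2)) * hEz
      + ((v 0 * z 0 + v 1 * z 1 + v 2 * z 2) * (v' 0 ^ 2 + v' 1 ^ 2 + v' 2 ^ 2)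
        - (v' 0 * z 0 + v' 1 * z 1 + v' 2 * z 2)
          * (v 0 * v' 0 + v 1 * v' 1 + v 2 * v' 2)) * hip
      + ((v' 0 * z 0 + v' 1 * z 1 + v' 2 * z 2) * (v 0 ^ 2 + v 1 ^ 2 + v 2 ^ 2)
        - (v 0 * z 0 + v 1 * z 1 + v 2 * z 2)
          * (v 0 * v' 0 + v 1 * v' 1 + v 2 * v' 2)) * hip'
  -- Fact B : z0 * c0(w,w') = lam
  have hkey : z 0 * (w 1 * w' 2 - w 2 * w' 1) = lam := by
    rw [hw1, hw2, hw'1, hw'2, hlam]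
    field_simp
    ring
  -- pd v v'
  have hpdv : pd v v' = |lam| / (en v * en v') := by
    rw [pd, hEv2, hEv'2, hKvv, hNv, Real.sqrt_sq_eq_abs]
  -- N(w, w')
  have hNw : en w ^ 2 * en w' ^ 2 - ip w w' ^ 2 = (lam / z 0) ^ 2 := by
    rw [hEw2, hEw'2, hKww, hw0, hw'0, ← hkey]
    field_simp
    ring
  have hpdw : pd w w' = |lam| / |z 0| / (en w * en w') := by
    rw [pd, hNw, Real.sqrt_sq_eq_abs, abs_div]
  -- positivity of norms
  have henv : 0 < en v := by
    rw [en]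
    apply Real.sqrt_pos.mpr
    rcases Function.ne_iff.mp hv with ⟨i, hi⟩
    have : 0 < v i ^ 2 := lt_of_le_of_ne (sq_nonneg _) (Ne.symm (pow_ne_zero _ hi))
    have h1 : v i ^ 2 ≤ ∑ j, v j ^ 2 :=
      Finset.single_le_sum (fun j _ => sq_nonneg (v j)) (Finset.mem_univ i)
    linarith
  have henv' : 0 < en v' := by
    rw [en]
    apply Real.sqrt_pos.mpr
    rcases Function.ne_iff.mp hv' with ⟨i, hi⟩
    have : 0 < v' i ^ 2 := lt_of_le_of_ne (sq_nonneg _) (Ne.symm (pow_ne_zero _ hi))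
    have h1 : v' i ^ 2 ≤ ∑ j, v' j ^ 2 :=
      Finset.single_le_sum (fun j _ => sq_nonneg (v' j)) (Finset.mem_univ i)
    linarith
  have hlam0 : 0 < |lam| := by
    rcases eq_or_lt_of_le (abs_nonneg lam) with h | h
    · exfalso; apply hdist
      rw [hpdv, ← h]; simp
    · exact h
  -- bounds on en w
  have hv0sq : v 0 ^ 2 ≤ (v 0 ^ 2 + v 1 ^ 2 + v 2 ^ 2) * (1 - z 0 ^ 2) := by
    have hipsq : v 0 ^ 2 * z 0 ^ 2 = (v 1 * z 1 + v 2 * z 2) ^ 2 := by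
      linear_combination (v 0 * z 0 - v 1 * z 1 - v 2 * z 2) * hip
    have hlag : (v 1 * z 1 + v 2 * z 2) ^ 2 + (v 1 * z 2 - v 2 * z 1) ^ 2
        = (v 1 ^ 2 + v 2 ^ 2) * (z 1 ^ 2 + z 2 ^ 2) := by ring
    have h1 : v 0 ^ 2 * z 0 ^ 2 ≤ (v 1 ^ 2 + v 2 ^ 2) * (z 1 ^ 2 + z 2 ^ 2) := by
      linarith [hipsq, hlag, sq_nonneg (v 1 * z 2 - v 2 * z 1)]
    have h2 : v 0 ^ 2 * (z 0 ^ 2 + z 1 ^ 2 + z 2 ^ 2) = v 0 ^ 2 := by rw [hEz, mul_one]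
    have h3 : (v 0 ^ 2 + v 1 ^ 2 + v 2 ^ 2) * (1 - z 0 ^ 2)
        = (v 0 ^ 2 + v 1 ^ 2 + v 2 ^ 2) * (z 1 ^ 2 + z 2 ^ 2) := by
      linear_combination (-(v 0 ^ 2 + v 1 ^ 2 + v 2 ^ 2)) * hEz
    linarith [h1, h2, h3]
  have hv'0sq : v' 0 ^ 2 ≤ (v' 0 ^ 2 + v' 1 ^ 2 + v' 2 ^ 2) * (1 - z 0 ^ 2) := by
    have hipsq : v' 0 ^ 2 * z 0 ^ 2 = (v' 1 * z 1 + v' 2 * z 2) ^ 2 := by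
      linear_combination (v' 0 * z 0 - v' 1 * z 1 - v' 2 * z 2) * hip'
    have hlag : (v' 1 * z 1 + v' 2 * z 2) ^ 2 + (v' 1 * z 2 - v' 2 * z 1) ^ 2
        = (v' 1 ^ 2 + v' 2 ^ 2) * (z 1 ^ 2 + z 2 ^ 2) := by ring
    have h1 : v' 0 ^ 2 * z 0 ^ 2 ≤ (v' 1 ^ 2 + v' 2 ^ 2) * (z 1 ^ 2 + z 2 ^ 2) := by
      linarith [hipsq, hlag, sq_nonneg (v' 1 * z 2 - v' 2 * z 1)]
    have h2 : v' 0 ^ 2 * (z 0 ^ 2 + z 1 ^ 2 + z 2 ^ 2) = v' 0 ^ 2 := by rw [hEz, mul_one]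
    have h3 : (v' 0 ^ 2 + v' 1 ^ 2 + v' 2 ^ 2) * (1 - z 0 ^ 2)
        = (v' 0 ^ 2 + v' 1 ^ 2 + v' 2 ^ 2) * (z 1 ^ 2 + z 2 ^ 2) := by
      linear_combination (-(v' 0 ^ 2 + v' 1 ^ 2 + v' 2 ^ 2)) * hEz
    linarith [h1, h2, h3]
  have hEwval : en w ^ 2 = en v ^ 2 + (v 0 / z 0) ^ 2 := by
    rw [hEw2, hEv2, hw0, hw1, hw2]
    field_simp
    linear_combination (-2 * (v 0 * z 0)) * hip + (v 0 ^ 2) * hEz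
  have hEw'val : en w' ^ 2 = en v' ^ 2 + (v' 0 / z 0) ^ 2 := by
    rw [hEw'2, hEv'2, hw'0, hw'1, hw'2]
    field_simp
    linear_combination (-2 * (v' 0 * z 0)) * hip' + (v' 0 ^ 2) * hEz
  have henw0 : 0 ≤ en w := Real.sqrt_nonneg _
  have henw'0 : 0 ≤ en w' := Real.sqrt_nonneg _
  have hwlow : en v ≤ en w :=
    sqle_aux henv.le henw0 (by linarith [hEwval, sq_nonneg (v 0 / z 0)])
  have hw'low : en v' ≤ en w' :=
    sqle_aux henv'.le henw'0 (by linarith [hEw'val, sq_nonneg (v' 0 / z 0)])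
  have hz0sq : 0 < z 0 ^ 2 := by positivity
  have hwhigh : |z 0| * en w ≤ en v := by
    have h1 : (|z 0| * en w) ^ 2 ≤ en v ^ 2 := by
      have hexp : z 0 ^ 2 * (en v ^ 2 + (v 0 / z 0) ^ 2)
          = z 0 ^ 2 * en v ^ 2 + v 0 ^ 2 := by field_simp
      have hthis : z 0 ^ 2 * (en v ^ 2 + (v 0 / z 0) ^ 2) ≤ en v ^ 2 := by
        rw [hexp, hEv2]; linarith [hv0sq]
      calc (|z 0| * en w) ^ 2 = z 0 ^ 2 * en w ^ 2 := by rw [mul_pow, sq_abs]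
        _ ≤ en v ^ 2 := by rw [hEwval]; exact hthis
    exact sqle_aux (by positivity) henv.le h1
  have hw'high : |z 0| * en w' ≤ en v' := by
    have h1 : (|z 0| * en w') ^ 2 ≤ en v' ^ 2 := by
      have hexp : z 0 ^ 2 * (en v' ^ 2 + (v' 0 / z 0) ^ 2)
          = z 0 ^ 2 * en v' ^ 2 + v' 0 ^ 2 := by field_simp
      have hthis : z 0 ^ 2 * (en v' ^ 2 + (v' 0 / z 0) ^ 2) ≤ en v' ^ 2 := by
        rw [hexp, hEv'2]; linarith [hv'0sq]
      calc (|z 0| * en w') ^ 2 = z 0 ^ 2 * en w' ^ 2 := by rw [mul_pow, sq_abs]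
        _ ≤ en v' ^ 2 := by rw [hEw'val]; exact hthis
    exact sqle_aux (by positivity) henv'.le h1
  have henw : 0 < en w := lt_of_lt_of_le henv hwlow
  have henw' : 0 < en w' := lt_of_lt_of_le henv' hw'low
  -- the ratio
  have hratio : pd w w' / pd v v' = (en v * en v') / (|z 0| * (en w * en w')) := by
    rw [hpdw, hpdv]
    field_simp
  have hCt : 1 ≤ C * |z 0| := by
    rw [div_le_iff₀ hC0] at hz0; linarith [hz0]
  obtain ⟨hlow, hhigh⟩ := ratio_bounds_aux hC ht0 hCt henv henv' henw henw'
    hwlow hw'low hwhigh hw'high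
  rw [hratio]
  exact ⟨hlow, hhigh⟩
end
end

section
/- Let τ be a Rajchman probability measure on P(R²) ≅ R/Z, i.e. its Fourier coefficients τ̂(m) = ∫ e^{2πimx} dτ(x) tend to 0 as |m| → ∞. Then τ is non-concentrated on arithmetic sequences: for every δ > 0 there exist l, k₀ ∈ N such that for all k > k₀, τ(⋃_{0 ≤ n < q^k} B(n/q^k, 1/q^{k+l})) ≤ δ. Moreover one can choose l with 10 < q^l δ ≤ 10q and k₀ such that |τ̂(j q^{k₀})| ≤ δ³/(10⁴ q²) for all j ≠ 0. -/
/- STATEMENT 19: Let τ be a Rajchman probability measure on P(ℝ²) ≅ ℝ/ℤ, i.e.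
τ̂(m) = ∫ e^{2πimx} dτ(x) → 0 as |m| → ∞.  Then τ is non-concentrated on
arithmetic sequences: for every δ > 0 there exist l, k₀ ∈ ℕ such that for all
k > k₀, τ(⋃_{0 ≤ n < q^k} B(n/q^k, 1/q^{k+l})) ≤ δ.  Moreover (when δ ≤ 10q, as
needed for such an l to exist) one can choose l with 10 < q^l δ ≤ 10q and k₀
with |τ̂(j q^{k₀})| ≤ δ³/(10⁴q²) for all j ≠ 0. -/

open MeasureTheory
open scoped ENNReal Real
noncomputable section

/-- The `m`-th Fourier coefficient of a measure on `ℝ/ℤ`. -/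
def mhat (τ : Measure (AddCircle (1 : ℝ))) (m : ℤ) : ℂ :=
  ∫ x : AddCircle (1 : ℝ), fourier m x ∂τ

open Complex

-- helper: continuous implies integrable on compact space with finite measure
lemma cont_integrable {E : Type*} [NormedAddCommGroup E] {f : AddCircle (1:ℝ) → E}
    (hf : Continuous f) (τ : Measure (AddCircle (1:ℝ))) [IsFiniteMeasure τ] :
    Integrable f τ := by
  have h := hf.continuousOn.integrableOn_compact (μ := τ) isCompact_univ
  rwa [integrableOn_univ] at h

-- |e^{iφ} - 1| = 2|sin(φ/2)|
lemma abs_exp_sub_one (φ : ℝ) :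
    ‖Complex.exp ((φ:ℂ) * Complex.I) - 1‖ = 2 * |Real.sin (φ/2)| := by
  rw [Complex.exp_mul_I]
  have h1 : Complex.cos φ = (Real.cos φ : ℂ) := by rw [Complex.ofReal_cos]
  have h2 : Complex.sin φ = (Real.sin φ : ℂ) := by rw [Complex.ofReal_sin]
  rw [h1, h2]
  have : (Real.cos φ : ℂ) + (Real.sin φ : ℂ) * Complex.I - 1
      = ((Real.cos φ - 1 : ℝ) : ℂ) + ((Real.sin φ : ℝ) : ℂ) * Complex.I := by
    push_cast; ring
  rw [this, Complex.norm_def, Complex.normSq_add_mul_I]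
  have hs : |Real.sin (φ/2)| ^ 2 = (1 - Real.cos φ)/2 := by
    rw [Real.abs_sin_half]
    exact Real.sq_sqrt (by nlinarith [Real.cos_le_one φ])
  have : (Real.cos φ - 1)^2 + Real.sin φ ^2 = (2 * |Real.sin (φ/2)|)^2 := by
    have hc : Real.sin φ ^ 2 + Real.cos φ ^ 2 = 1 := Real.sin_sq_add_cos_sq φ
    nlinarith
  rw [this, Real.sqrt_sq (by positivity)]


lemma geom_abs (N : ℕ) (hN : 1 ≤ N) (θ : ℝ) (hθ : |θ| ≤ 1/(2*N)) :
    2*N/π ≤ ‖∑ j ∈ Finset.range N, Complex.exp (((2*π*θ*j : ℝ) : ℂ) * Complex.I)‖ := by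
  have hNpos : (0:ℝ) < N := by exact_mod_cast hN
  have hN1 : (1:ℝ) ≤ N := by exact_mod_cast hN
  have hθhalf : |θ| ≤ 1/2 := le_trans hθ (by
    rw [div_le_div_iff₀ (by positivity) (by norm_num)]; nlinarith)
  by_cases hθ0 : θ = 0
  · subst hθ0
    simp only [mul_zero, zero_mul, Complex.ofReal_zero, Complex.exp_zero]
    rw [Finset.sum_const, Finset.card_range, nsmul_eq_mul, mul_one, Complex.norm_natCast]
    rw [div_le_iff₀ Real.pi_pos]
    nlinarith [Real.pi_gt_three]
  · have hθpos : 0 < |θ| := abs_pos.mpr hθ0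
    set x := Complex.exp (((2*π*θ : ℝ):ℂ) * Complex.I) with hxdef
    have hterm : ∀ j : ℕ, Complex.exp (((2*π*θ*j : ℝ) : ℂ) * Complex.I) = x ^ j := by
      intro j
      rw [hxdef, ← Complex.exp_nat_mul]
      congr 1
      push_cast; ring
    have hx1 : x ≠ 1 := by
      intro h
      rw [hxdef, Complex.exp_eq_one_iff] at h
      obtain ⟨n, hn⟩ := h
      have him : 2*π*θ = n * (2*π) := by
        have := congrArg Complex.im hn
        simpa using this
      have hθn : θ = n := by
        have hpi := Real.pi_ne_zero
        have : 2*π*θ = 2*π*n := by linarith [him]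
        have h2 : (2*π) ≠ 0 := by positivity
        field_simp at this
        tauto
      have hn0 : n ≠ 0 := by rintro rfl; simp [hθn] at hθ0
      have h1 : (1:ℝ) ≤ |θ| := by
        rw [hθn]
        exact_mod_cast Int.one_le_abs hn0
      linarith
    simp_rw [hterm]
    rw [geom_sum_eq hx1, norm_div]
    have hxN : x ^ N = Complex.exp (((2*π*(N*θ) : ℝ):ℂ) * Complex.I) := by
      rw [hxdef, ← Complex.exp_nat_mul]; congr 1; push_cast; ring
    have hnum : ‖x ^ N - 1‖ = 2 * |Real.sin (π*(N*θ))| := by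
      rw [hxN, abs_exp_sub_one, show (2*π*(N*θ):ℝ)/2 = π*(N*θ) by ring]
    have hden : ‖x - 1‖ = 2 * |Real.sin (π*θ)| := by
      rw [hxdef, abs_exp_sub_one, show (2*π*θ:ℝ)/2 = π*θ by ring]
    rw [hnum, hden]
    -- reduce |sin| to sin of |·|
    have key : ∀ c : ℝ, 0 ≤ c → c * |θ| ≤ π → |Real.sin (c*θ)| = Real.sin (c*|θ|) := by
      intro c hc hcπ
      have h0 : 0 ≤ c * |θ| := by positivity
      have hnn : 0 ≤ Real.sin (c*|θ|) := Real.sin_nonneg_of_nonneg_of_le_pi h0 hcπ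
      rcases abs_cases θ with ⟨h1, h2⟩ | ⟨h1, h2⟩
      · rw [h1] at hnn ⊢
        exact abs_of_nonneg hnn
      · rw [h1] at hnn ⊢
        rw [mul_neg, Real.sin_neg] at hnn ⊢
        rw [abs_of_nonpos (by linarith)]
    have hNθ : (N:ℝ)*|θ| ≤ 1/2 := by
      have h := mul_le_mul_of_nonneg_left hθ (le_of_lt hNpos)
      calc (N:ℝ)*|θ| ≤ (N:ℝ) * (1/(2*N)) := h
        _ = 1/2 := by field_simp
    have hm2 : |Real.sin (π*(N*θ))| = Real.sin (π*N*|θ|) := by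
      rw [show π*((N:ℝ)*θ) = (π*N)*θ by ring]
      exact key (π*N) (by positivity) (by
        rw [mul_assoc]
        nlinarith [Real.pi_pos])
    have hm1 : |Real.sin (π*θ)| = Real.sin (π*|θ|) := by
      exact key π Real.pi_pos.le (by nlinarith [Real.pi_pos])
    rw [hm2, hm1]
    have hnumge : 2*(N:ℝ)*|θ| ≤ Real.sin (π*N*|θ|) := by
      have h := Real.mul_le_sin (x := π*N*|θ|) (by positivity) (by
        rw [mul_assoc]
        nlinarith [Real.pi_pos])
      calc 2*(N:ℝ)*|θ| = 2/π * (π*N*|θ|) := by field_simp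
        _ ≤ Real.sin (π*N*|θ|) := h
    have hdenle : Real.sin (π*|θ|) ≤ π*|θ| := by
      have := Real.sin_le (x := π*|θ|) (by positivity)
      linarith
    have hdenpos : 0 < Real.sin (π*|θ|) :=
      Real.sin_pos_of_pos_of_lt_pi (by positivity) (by nlinarith [Real.pi_pos])
    have hfinal : 2*(N:ℝ)*|θ| / (π*|θ|) ≤
        (2 * Real.sin (π*N*|θ|)) / (2 * Real.sin (π*|θ|)) := by
      rw [show (2 * Real.sin (π*N*|θ|)) / (2 * Real.sin (π*|θ|))
          = Real.sin (π*N*|θ|) / Real.sin (π*|θ|) by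
        rw [mul_div_mul_left _ _ (by norm_num : (2:ℝ) ≠ 0)]]
      exact div_le_div₀ (le_trans (by positivity : (0:ℝ) ≤ 2*(N:ℝ)*|θ|) hnumge) hnumge hdenpos hdenle
    calc 2*(N:ℝ)/π = 2*(N:ℝ)*|θ| / (π*|θ|) := by
          rw [mul_div_mul_right _ _ (ne_of_gt hθpos)]
      _ ≤ _ := hfinal


lemma sum_lower (q : ℕ) (hq : 1 < q) (k l N : ℕ) (hN : 1 ≤ N) (h2N : (2*(N:ℝ)) ≤ (q:ℝ)^l)
    (n : ℕ) (x : AddCircle (1:ℝ))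
    (hx : x ∈ Metric.ball (((n : ℝ) / (q : ℝ) ^ k : ℝ) : AddCircle (1:ℝ)) (1 / (q : ℝ) ^ (k + l))) :
    2*N/π ≤ ‖∑ j ∈ Finset.range N, fourier ((j : ℤ) * (q:ℤ)^k) x‖ := by
  have hq0 : (0:ℝ) < q := by positivity
  have hq1 : (1:ℝ) < q := by exact_mod_cast hq
  have hqk : (0:ℝ) < (q:ℝ)^k := by positivity
  obtain ⟨a, rfl⟩ : ∃ a : ℝ, (a : AddCircle (1:ℝ)) = x :=
    QuotientAddGroup.mk'_surjective _ x
  rw [Metric.mem_ball, dist_eq_norm] at hx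
  set c : ℝ := (n : ℝ) / (q : ℝ) ^ k with hc
  have hsub : (a : AddCircle (1:ℝ)) - (c : AddCircle (1:ℝ)) = ((a - c : ℝ) : AddCircle (1:ℝ)) := rfl
  rw [hsub, AddCircle.norm_eq] at hx
  simp only [inv_one, one_mul, mul_one] at hx
  set m : ℤ := round (a - c) with hm
  set t : ℝ := a - c - m with ht
  have hat : a = c + t + m := by rw [ht]; ring
  set θ : ℝ := (q:ℝ)^k * t with hθdef
  have hterm : ∀ j ∈ Finset.range N,
      (fourier ((j : ℤ) * (q:ℤ)^k) ((a : ℝ) : AddCircle (1:ℝ)) : ℂ)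
        = Complex.exp (((2*π*θ*j : ℝ) : ℂ) * Complex.I) := by
    intro j _
    rw [fourier_coe_apply]
    have harg : 2 * (π:ℂ) * Complex.I * ((j : ℤ) * (q:ℤ)^k : ℤ) * (a:ℝ) / ((1:ℝ):ℂ)
        = ((2*π*θ*j : ℝ) : ℂ) * Complex.I
          + ((j * n + j * (q:ℤ)^k * m : ℤ) : ℂ) * (2 * (π:ℂ) * Complex.I) := by
      have hqkc : ((q:ℝ)^k : ℂ) ≠ 0 := by
        exact_mod_cast ne_of_gt hqk
      have hqc : ((q:ℕ):ℂ) ≠ 0 := by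
        exact_mod_cast hq0.ne'
      rw [hat, hθdef, hc]
      push_cast
      field_simp [hqc]
      ring
    rw [harg, Complex.exp_add, Complex.exp_int_mul_two_pi_mul_I, mul_one]
  rw [Finset.sum_congr rfl hterm]
  apply geom_abs N hN
  -- |θ| ≤ 1/(2N)
  have htlt : |t| < 1 / (q:ℝ)^(k+l) := hx
  have hθlt : |θ| < 1 / (q:ℝ)^l := by
    rw [hθdef, abs_mul, abs_of_pos hqk]
    calc (q:ℝ)^k * |t| < (q:ℝ)^k * (1 / (q:ℝ)^(k+l)) := by
          exact mul_lt_mul_of_pos_left htlt hqk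
      _ = 1 / (q:ℝ)^l := by
          rw [pow_add]; field_simp
  have h2N' : 1 / (q:ℝ)^l ≤ 1/(2*N) := by
    apply div_le_div_of_nonneg_left (by norm_num) (by positivity)
    exact h2N
  linarith


lemma mhat_zero (τ : Measure (AddCircle (1 : ℝ))) [IsProbabilityMeasure τ] :
    mhat τ 0 = 1 := by
  unfold mhat
  simp only [fourier_zero]
  simp

lemma integral_bound (τ : Measure (AddCircle (1:ℝ))) [IsProbabilityMeasure τ]
    (N : ℕ) (a : ℤ) (η : ℝ) (hη0 : 0 ≤ η)
    (hη : ∀ m : ℤ, m ≠ 0 → ‖mhat τ (m * a)‖ ≤ η) :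
    ∫ x, ‖∑ j ∈ Finset.range N, (fourier ((j:ℤ) * a) x : ℂ)‖^2 ∂τ ≤ N + N^2 * η := by
  have hfcont : ∀ m : ℤ, Continuous (fun x : AddCircle (1:ℝ) => (fourier m x : ℂ)) :=
    fun m => (fourier m).continuous
  set D : AddCircle (1:ℝ) → ℂ := fun x => ∑ j ∈ Finset.range N, fourier ((j:ℤ) * a) x with hD
  have hDcont : Continuous D := continuous_finset_sum _ (fun j _ => hfcont _)
  have hexp : ∀ x, D x * (starRingEnd ℂ) (D x)
      = ∑ j ∈ Finset.range N, ∑ j' ∈ Finset.range N, (fourier (((j:ℤ) - j') * a) x : ℂ) := by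
    intro x
    rw [hD]
    simp only [map_sum]
    rw [Finset.sum_mul_sum]
    refine Finset.sum_congr rfl fun j _ => Finset.sum_congr rfl fun j' _ => ?_
    rw [← fourier_neg, ← fourier_add]
    congr 1; ring
  have hnormsq : ∀ x, ‖D x‖^2 = (D x * (starRingEnd ℂ) (D x)).re := by
    intro x
    rw [Complex.mul_conj]
    simp [Complex.normSq_eq_norm_sq, ← Complex.ofReal_pow]
  have hint : ∀ m : ℤ, Integrable (fun x : AddCircle (1:ℝ) => (fourier m x : ℂ)) τ :=
    fun m => cont_integrable (hfcont m) τ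
  calc ∫ x, ‖D x‖^2 ∂τ
      = ∫ x, (D x * (starRingEnd ℂ) (D x)).re ∂τ := by
        refine integral_congr_ae (Filter.Eventually.of_forall fun x => ?_)
        exact hnormsq x
    _ = (∫ x, D x * (starRingEnd ℂ) (D x) ∂τ).re := by
        have hI : Integrable (fun x => D x * (starRingEnd ℂ) (D x)) τ :=
          cont_integrable (hDcont.mul (Complex.continuous_conj.comp hDcont)) τ
        rw [← RCLike.re_eq_complex_re, ← integral_re hI]
    _ = (∑ j ∈ Finset.range N, ∑ j' ∈ Finset.range N, mhat τ (((j:ℤ) - j') * a)).re := by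
        congr 1
        calc ∫ x, D x * (starRingEnd ℂ) (D x) ∂τ
            = ∫ x, ∑ j ∈ Finset.range N, ∑ j' ∈ Finset.range N,
                (fourier (((j:ℤ) - j') * a) x : ℂ) ∂τ := by
              exact integral_congr_ae (Filter.Eventually.of_forall fun x => hexp x)
          _ = ∑ j ∈ Finset.range N, ∑ j' ∈ Finset.range N, mhat τ (((j:ℤ) - j') * a) := by
              rw [integral_finset_sum _ (fun j _ => by
                exact (cont_integrable (continuous_finset_sum _ fun j' _ => hfcont _) τ))]
              exact Finset.sum_congr rfl fun j _ => integral_finset_sum _ fun j' _ => hint _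
    _ ≤ ∑ j ∈ Finset.range N, ∑ j' ∈ Finset.range N,
          (η + if j = j' then (1:ℝ) else 0) := by
        rw [Complex.re_sum]
        refine Finset.sum_le_sum fun j _ => ?_
        rw [Complex.re_sum]
        refine Finset.sum_le_sum fun j' _ => ?_
        by_cases hjj : j = j'
        · subst hjj
          simp only [sub_self, zero_mul, mhat_zero, if_pos rfl]
          norm_num; linarith
        · rw [if_neg hjj]
          have h1 : (mhat τ (((j:ℤ) - j') * a)).re ≤ ‖mhat τ (((j:ℤ) - j') * a)‖ :=
            Complex.re_le_norm _
          have h2 : ‖mhat τ (((j:ℤ) - j') * a)‖ ≤ η := by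
            apply hη
            simp only [ne_eq, sub_eq_zero]
            exact_mod_cast hjj
          linarith
    _ = N + N^2 * η := by
        rw [Finset.sum_congr rfl (fun j _ => Finset.sum_add_distrib)]
        rw [Finset.sum_add_distrib]
        simp only [Finset.sum_const, Finset.card_range, nsmul_eq_mul]
        have : ∀ j ∈ Finset.range N,
            (∑ j' ∈ Finset.range N, if j = j' then (1:ℝ) else 0) = 1 := by
          intro j hj
          rw [Finset.sum_ite_eq]
          simp [Finset.mem_range.mp hj]
        rw [Finset.sum_congr rfl this]
        simp only [Finset.sum_const, Finset.card_range, nsmul_eq_mul, mul_one]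
        ring


lemma measure_bound (q : ℕ) (hq : 1 < q) (τ : Measure (AddCircle (1:ℝ))) [IsProbabilityMeasure τ]
    (l N : ℕ) (hN : 1 ≤ N) (h2N : (2*(N:ℝ)) ≤ (q:ℝ)^l)
    (k : ℕ) (η : ℝ) (hη0 : 0 ≤ η)
    (hη : ∀ m : ℤ, m ≠ 0 → ‖mhat τ (m * (q:ℤ)^k)‖ ≤ η) :
    (τ (⋃ n ∈ Finset.range (q ^ k),
        Metric.ball (((n : ℝ) / (q : ℝ) ^ k : ℝ) : AddCircle (1 : ℝ))
          (1 / (q : ℝ) ^ (k + l)))).toReal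
      ≤ ((N:ℝ) + N^2*η) / (2*N/π)^2 := by
  have hNpos : (0:ℝ) < N := by exact_mod_cast hN
  set g : AddCircle (1:ℝ) → ℝ :=
    fun x => ‖∑ j ∈ Finset.range N, (fourier ((j:ℤ) * (q:ℤ)^k) x : ℂ)‖^2 with hg
  set c : ℝ := (2*N/π)^2 with hc
  have hcpos : 0 < c := by
    rw [hc]; positivity
  set E := ⋃ n ∈ Finset.range (q ^ k),
      Metric.ball (((n : ℝ) / (q : ℝ) ^ k : ℝ) : AddCircle (1 : ℝ))
        (1 / (q : ℝ) ^ (k + l)) with hE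
  have hsubset : E ⊆ {x | c ≤ g x} := by
    intro x hx
    rw [hE, Set.mem_iUnion] at hx
    obtain ⟨n, hn⟩ := hx
    rw [Set.mem_iUnion] at hn
    obtain ⟨hnmem, hxball⟩ := hn
    have hlow := sum_lower q hq k l N hN h2N n x hxball
    have : 2*(N:ℝ)/π ≤ ‖∑ j ∈ Finset.range N, (fourier ((j:ℤ) * (q:ℤ)^k) x : ℂ)‖ := hlow
    rw [Set.mem_setOf_eq, hg, hc]
    have h0 : (0:ℝ) ≤ 2*N/π := by positivity
    nlinarith [norm_nonneg (∑ j ∈ Finset.range N, (fourier ((j:ℤ) * (q:ℤ)^k) x : ℂ))]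
  have hgcont : Continuous g := by
    rw [hg]
    exact ((continuous_finset_sum _ fun j _ => (fourier _).continuous).norm).pow 2
  have hmarkov := mul_meas_ge_le_integral_of_nonneg
    (Filter.Eventually.of_forall (fun x => by positivity) : 0 ≤ᶠ[ae τ] g)
    (cont_integrable hgcont τ) c
  have hint := integral_bound τ N ((q:ℤ)^k) η hη0 hη
  have hmono : (τ E).toReal ≤ (τ {x | c ≤ g x}).toReal := by
    apply ENNReal.toReal_mono (measure_ne_top τ _)
    exact measure_mono hsubset
  have : c * (τ E).toReal ≤ (N:ℝ) + N^2*η := by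
    calc c * (τ E).toReal ≤ c * (τ {x | c ≤ g x}).toReal := by
          exact mul_le_mul_of_nonneg_left hmono hcpos.le
      _ ≤ ∫ x, g x ∂τ := hmarkov
      _ ≤ (N:ℝ) + N^2*η := hint
  rw [le_div_iff₀ hcpos]
  linarith [this]


lemma exists_k0 (q : ℕ) (hq : 1 < q) (τ : Measure (AddCircle (1:ℝ)))
    (hraj : Filter.Tendsto (fun m : ℤ => mhat τ m) Filter.cofinite (nhds 0))
    (η : ℝ) (hη : 0 < η) :
    ∃ k₀ : ℕ, ∀ j : ℤ, j ≠ 0 → ‖mhat τ (j * (q:ℤ)^k₀)‖ ≤ η := by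
  have hev : ∀ᶠ m : ℤ in Filter.cofinite, ‖mhat τ m‖ < η := by
    have := hraj (Metric.ball_mem_nhds (0:ℂ) hη)
    rw [Filter.mem_map] at this
    refine Filter.mem_of_superset this ?_
    intro m hm
    simpa [Metric.mem_ball, dist_eq_norm] using hm
  rw [Filter.eventually_cofinite] at hev
  obtain ⟨K, hK⟩ := (hev.image Int.natAbs).bddAbove
  refine ⟨K + 1, fun j hj => ?_⟩
  by_contra hcon
  push_neg at hcon
  have hmem : (j * (q:ℤ)^(K+1)).natAbs ∈ Int.natAbs '' {m : ℤ | ¬‖mhat τ m‖ < η} := by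
    exact Set.mem_image_of_mem _ (by simp only [Set.mem_setOf_eq]; push_neg; linarith)
  have hle : (j * (q:ℤ)^(K+1)).natAbs ≤ K := hK hmem
  have hge : q^(K+1) ≤ (j * (q:ℤ)^(K+1)).natAbs := by
    rw [Int.natAbs_mul]
    have h1 : 1 ≤ j.natAbs := Int.natAbs_pos.mpr hj
    have h2 : ((q:ℤ)^(K+1)).natAbs = q^(K+1) := by
      simp [Int.natAbs_pow]
    calc q^(K+1) = 1 * q^(K+1) := (one_mul _).symm
      _ ≤ j.natAbs * ((q:ℤ)^(K+1)).natAbs := by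
          rw [h2]; exact Nat.mul_le_mul_right _ h1
  have hKlt : K < q^(K+1) := by
    calc K < K + 1 := Nat.lt_succ_self K
      _ < q^(K+1) := Nat.lt_pow_self hq
  omega

lemma exists_l (q : ℕ) (hq : 1 < q) (δ : ℝ) (hδ : 0 < δ) (hδq : δ ≤ 10*q) :
    ∃ l : ℕ, 10 < (q:ℝ)^l * δ ∧ (q:ℝ)^l * δ ≤ 10*q := by
  have hq1 : (1:ℝ) < q := by exact_mod_cast hq
  have hex : ∃ l : ℕ, 10 < (q:ℝ)^l * δ := by
    obtain ⟨n, hn⟩ := pow_unbounded_of_one_lt (10/δ) hq1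
    exact ⟨n, by rw [← div_lt_iff₀ hδ]; linarith⟩
  classical
  refine ⟨Nat.find hex, Nat.find_spec hex, ?_⟩
  rcases Nat.eq_zero_or_pos (Nat.find hex) with h0 | hpos
  · rw [h0]; simpa using hδq
  · have hlt : Nat.find hex - 1 < Nat.find hex := Nat.sub_lt hpos one_pos
    have hmin := Nat.find_min hex hlt
    push_neg at hmin
    have hsucc : Nat.find hex = (Nat.find hex - 1) + 1 := (Nat.succ_pred_eq_of_pos hpos).symm
    calc (q:ℝ)^(Nat.find hex) * δ = (q:ℝ) * ((q:ℝ)^(Nat.find hex - 1) * δ) := by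
          conv_lhs => rw [hsucc]
          rw [pow_succ]; ring
      _ ≤ (q:ℝ) * 10 := by
          apply mul_le_mul_of_nonneg_left hmin (by linarith)
      _ = 10 * q := by ring


lemma final_numeric (q : ℕ) (hq : 1 < q) (δ : ℝ) (hδpos : 0 < δ) (hδ1 : δ < 1)
    (Nr : ℝ) (hN : 0 < Nr) (hδN : 9 ≤ 2*δ*Nr) :
    π^2/(4*Nr) + π^2*(δ^3/(10^4*(q:ℝ)^2))/4 ≤ δ := by
  have hq2 : (2:ℝ) ≤ q := by exact_mod_cast hq
  have hπlt : π < 3.15 := Real.pi_lt_d2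
  have hπpos := Real.pi_pos
  have hπsq : π^2 ≤ 10 := by nlinarith
  have hb1 : π^2/(4*Nr) ≤ 5*δ/9 := by
    rw [div_le_iff₀ (by positivity)]
    nlinarith
  have hq2sq : (4:ℝ) ≤ (q:ℝ)^2 := by nlinarith
  have hδsq : δ^2 ≤ 1 := by nlinarith [sq_nonneg (1-δ)]
  have hδ3 : δ^3 ≤ δ := by nlinarith [mul_le_mul_of_nonneg_left hδsq hδpos.le]
  set η : ℝ := δ^3/(10^4*(q:ℝ)^2) with hηdef
  have hηpos : 0 < η := by positivity
  have hη' : η ≤ δ/40000 := by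
    rw [hηdef, div_le_div_iff₀ (by positivity) (by norm_num)]
    nlinarith
  have hb2 : π^2*η/4 ≤ δ/4 := by
    have h1 : π^2*η ≤ 10*η := by nlinarith
    linarith
  linarith

lemma core (q : ℕ) (hq : 1 < q) (τ : Measure (AddCircle (1:ℝ))) [IsProbabilityMeasure τ]
    (hraj : Filter.Tendsto (fun m : ℤ => mhat τ m) Filter.cofinite (nhds 0))
    (δ : ℝ) (hδpos : 0 < δ) (hδ1 : δ < 1) :
    ∃ l k₀ : ℕ,
      ((10:ℝ) < (q:ℝ)^l * δ ∧ (q:ℝ)^l * δ ≤ 10*q) ∧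
      (∀ j : ℤ, j ≠ 0 → ‖mhat τ (j * (q:ℤ)^k₀)‖ ≤ δ^3/(10^4*(q:ℝ)^2)) ∧
      ∀ k : ℕ, k₀ < k →
        τ (⋃ n ∈ Finset.range (q ^ k),
            Metric.ball (((n : ℝ) / (q : ℝ) ^ k : ℝ) : AddCircle (1 : ℝ))
              (1 / (q : ℝ) ^ (k + l)))
          ≤ ENNReal.ofReal δ := by
  have hq1 : (1:ℝ) < q := by exact_mod_cast hq
  have hq2 : (2:ℝ) ≤ q := by exact_mod_cast hq
  set η : ℝ := δ^3/(10^4*(q:ℝ)^2) with hηdef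
  have hηpos : 0 < η := by positivity
  obtain ⟨l, hl1, hl2⟩ := exists_l q hq δ hδpos (by nlinarith)
  obtain ⟨k₀, hk₀⟩ := exists_k0 q hq τ hraj η hηpos
  set N : ℕ := q^l / 2 with hNdef
  have hqlpos : (0:ℝ) < (q:ℝ)^l := by positivity
  have hqlR : (10:ℝ) < (q:ℝ)^l := by nlinarith
  have hqlN : 10 < q^l := by
    have : ((10:ℕ):ℝ) < ((q^l : ℕ):ℝ) := by push_cast; linarith
    exact_mod_cast this
  have hN1 : 1 ≤ N := by omega
  have hNpos : (0:ℝ) < N := by exact_mod_cast hN1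
  have h2N : (2*(N:ℝ)) ≤ (q:ℝ)^l := by
    have h : 2 * N ≤ q^l := by omega
    have := (Nat.cast_le (α := ℝ)).mpr h
    push_cast at this ⊢
    linarith
  have hNlb : ((q:ℝ)^l - 1)/2 ≤ (N:ℝ) := by
    have h : q^l ≤ 2*N + 1 := by omega
    have := (Nat.cast_le (α := ℝ)).mpr h
    push_cast at this
    linarith
  refine ⟨l, k₀, ⟨hl1, hl2⟩, hk₀, fun k hk => ?_⟩
  have hηk : ∀ m : ℤ, m ≠ 0 → ‖mhat τ (m * (q:ℤ)^k)‖ ≤ η := by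
    intro m hm
    have hsplit : m * (q:ℤ)^k = (m * (q:ℤ)^(k - k₀)) * (q:ℤ)^k₀ := by
      rw [mul_assoc, ← pow_add]
      congr 2
      omega
    rw [hsplit]
    apply hk₀
    refine mul_ne_zero hm (pow_ne_zero _ ?_)
    have : (0:ℤ) < (q:ℤ) := by exact_mod_cast Nat.zero_lt_of_lt hq
    exact this.ne'
  have hmb := measure_bound q hq τ l N hN1 h2N k η hηpos.le hηk
  have hrw : ((N:ℝ) + N^2*η) / (2*N/π)^2 = π^2/(4*N) + π^2*η/4 := by
    have hπ : (π:ℝ) ≠ 0 := Real.pi_ne_zero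
    field_simp
    ring
  rw [hrw] at hmb
  have hδN : (9:ℝ) ≤ 2*δ*N := by nlinarith
  have htotal := le_trans hmb (final_numeric q hq δ hδpos hδ1 (N:ℝ) hNpos hδN)
  rw [← ENNReal.ofReal_toReal (measure_ne_top τ _)]
  exact ENNReal.ofReal_le_ofReal htotal

theorem rajchman_implies_nonconcentration_on_arithmetic_sequences
    (q : ℕ) (hq : 1 < q)
    (τ : Measure (AddCircle (1 : ℝ))) [IsProbabilityMeasure τ]
    -- τ is a Rajchman measure: τ̂(m) → 0 as |m| → ∞
    (hraj : Filter.Tendsto (fun m : ℤ => mhat τ m) Filter.cofinite (nhds 0))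
    (δ : ℝ) (hδ : 0 < δ) :
    (∃ l k₀ : ℕ, ∀ k : ℕ, k₀ < k →
      τ (⋃ n ∈ Finset.range (q ^ k),
          Metric.ball (((n : ℝ) / (q : ℝ) ^ k : ℝ) : AddCircle (1 : ℝ))
            (1 / (q : ℝ) ^ (k + l)))
        ≤ ENNReal.ofReal δ) ∧
    (δ ≤ 10 * q →
      ∃ l k₀ : ℕ,
        (10 < (q : ℝ) ^ l * δ ∧ (q : ℝ) ^ l * δ ≤ 10 * q) ∧
        (∀ j : ℤ, j ≠ 0 → ‖mhat τ (j * (q : ℤ) ^ k₀)‖ ≤ δ ^ 3 / (10 ^ 4 * (q : ℝ) ^ 2)) ∧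
        ∀ k : ℕ, k₀ < k →
          τ (⋃ n ∈ Finset.range (q ^ k),
              Metric.ball (((n : ℝ) / (q : ℝ) ^ k : ℝ) : AddCircle (1 : ℝ))
                (1 / (q : ℝ) ^ (k + l)))
            ≤ ENNReal.ofReal δ) := by
  constructor
  · by_cases h1 : δ < 1
    · obtain ⟨l, k₀, _h, _h2, hbound⟩ := core q hq τ hraj δ hδ h1
      exact ⟨l, k₀, hbound⟩
    · push_neg at h1
      refine ⟨0, 0, fun k _ => ?_⟩
      calc τ _ ≤ 1 := prob_le_one
        _ = ENNReal.ofReal 1 := ENNReal.ofReal_one.symm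
        _ ≤ ENNReal.ofReal δ := ENNReal.ofReal_le_ofReal h1
  · intro hδq
    by_cases h1 : δ < 1
    · exact core q hq τ hraj δ hδ h1
    · push_neg at h1
      obtain ⟨l, hl⟩ := exists_l q hq δ hδ hδq
      obtain ⟨k₀, hk₀⟩ := exists_k0 q hq τ hraj (δ^3/(10^4*(q:ℝ)^2)) (by positivity)
      refine ⟨l, k₀, hl, hk₀, fun k _ => ?_⟩
      calc τ _ ≤ 1 := prob_le_one
        _ = ENNReal.ofReal 1 := ENNReal.ofReal_one.symm
        _ ≤ ENNReal.ofReal δ := ENNReal.ofReal_le_ofReal h1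
end
end
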